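/- arXiv:2101.04486 — 5 statements merged into one kernel-verified Lean document; each statement's English description precedes it below -/
import Mathlib

section
/- Let f(q) = ∑_{ℓ=1}^{L} μ_ℓ ∑_{i ∈ N_ℓ} q^(i) ln q^(i), where {N_ℓ}_{ℓ=1}^L is a partition of {1,…,n} and 0 < μ_ℓ ≤ 1 for each ℓ. Then for every q in the interior of the simplex and every h ∈ ℝⁿ, the Hessian of f satisfies ⟨∇²f(q)h, h⟩ ≥ β‖h‖₁², where β = min_{1≤ℓ≤L} μ_ℓ. -/
open Real Finset


lemma second_deriv_aux (n : ℕ) (w : Fin n → ℝ) (q h : Fin n → ℝ) (hq : ∀ i, q i ≠ 0) :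
    iteratedFDeriv ℝ 2 (fun p : Fin n → ℝ => ∑ i, w i * (p i * Real.log (p i))) q (fun _ => h)
      = ∑ i, w i * (q i)⁻¹ * (h i * h i) := by
  set pr : Fin n → ((Fin n → ℝ) →L[ℝ] ℝ) := fun i => ContinuousLinearMap.proj i with hpr
  set F : (Fin n → ℝ) → ℝ := fun p => ∑ i, w i * (p i * Real.log (p i)) with hF
  set D1 : (Fin n → ℝ) → ((Fin n → ℝ) →L[ℝ] ℝ) :=
    fun p => ∑ i, (w i * (Real.log (p i) + 1)) • pr i with hD1def
  have hD1 : ∀ p : Fin n → ℝ, (∀ i, p i ≠ 0) → HasFDerivAt F (D1 p) p := by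
    intro p hp
    refine HasFDerivAt.fun_sum fun i _ => ?_
    have h1 : HasFDerivAt (fun y : Fin n → ℝ => y i * Real.log (y i))
        ((Real.log (p i) + 1) • pr i) p := by
      have := (Real.hasDerivAt_mul_log (hp i)).comp_hasFDerivAt p
        (show HasFDerivAt (fun y : Fin n → ℝ => y i) (pr i) p from (pr i).hasFDerivAt)
      exact this
    have := h1.const_mul (w i)
    simpa [smul_smul, mul_comm, mul_assoc, mul_left_comm] using this
  have hopen : IsOpen {p : Fin n → ℝ | ∀ i, p i ≠ 0} := by
    have : {p : Fin n → ℝ | ∀ i, p i ≠ 0} = ⋂ i, {p : Fin n → ℝ | p i ≠ 0} := by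
      ext p; simp
    rw [this]
    exact isOpen_iInter_of_finite fun i =>
      (isOpen_compl_singleton).preimage (continuous_apply i)
  have hev : fderiv ℝ F =ᶠ[nhds q] D1 := by
    filter_upwards [hopen.mem_nhds (by exact hq)] with p hp
    exact (hD1 p hp).fderiv
  have hc : ∀ i : Fin n, HasFDerivAt (fun p : Fin n → ℝ => w i * (Real.log (p i) + 1))
      ((w i * (q i)⁻¹) • pr i) q := by
    intro i
    have hlog : HasFDerivAt (fun p : Fin n → ℝ => Real.log (p i)) ((q i)⁻¹ • pr i) q := by
      have := (Real.hasDerivAt_log (hq i)).comp_hasFDerivAt q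
        (show HasFDerivAt (fun y : Fin n → ℝ => y i) (pr i) q from (pr i).hasFDerivAt)
      exact this
    have := (hlog.add_const 1).const_mul (w i)
    simpa [smul_smul, mul_comm, mul_assoc, mul_left_comm] using this
  set D2 : (Fin n → ℝ) →L[ℝ] ((Fin n → ℝ) →L[ℝ] ℝ) :=
    ∑ i, ((w i * (q i)⁻¹) • pr i).smulRight (pr i) with hD2def
  have hD2 : HasFDerivAt D1 D2 q := by
    refine HasFDerivAt.fun_sum fun i _ => ?_
    have := (hc i).fun_smul (hasFDerivAt_const (pr i) q)
    simpa using this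
  rw [iteratedFDeriv_two_apply]
  have heq : fderiv ℝ (fderiv ℝ F) q = D2 := by
    rw [hev.fderiv_eq, hD2.fderiv]
  rw [heq]
  simp [hD2def, hpr, ContinuousLinearMap.sum_apply, ContinuousLinearMap.smulRight_apply,
    ContinuousLinearMap.smul_apply, ContinuousLinearMap.proj_apply, smul_eq_mul, mul_assoc]


theorem hessian_quadratic_form_lower_bound
    (n L : ℕ) (hL : 0 < L)
    (N : Fin L → Finset (Fin n)) (μ : Fin L → ℝ)
    (hμ : ∀ ℓ, 0 < μ ℓ ∧ μ ℓ ≤ 1)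
    (hdisj : ∀ ℓ ℓ', ℓ ≠ ℓ' → Disjoint (N ℓ) (N ℓ'))
    (hcover : Finset.univ.biUnion N = (Finset.univ : Finset (Fin n)))
    (f : (Fin n → ℝ) → ℝ)
    (hf : f = fun q => ∑ ℓ, μ ℓ * ∑ i ∈ N ℓ, q i * Real.log (q i))
    (q : Fin n → ℝ) (hq_pos : ∀ i, 0 < q i) (hq_sum : ∑ i, q i = 1)
    (h : Fin n → ℝ) :
    (⨅ ℓ, μ ℓ) * (∑ i, |h i|) ^ 2 ≤ iteratedFDeriv ℝ 2 f q (fun _ => h) := by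
  haveI : Nonempty (Fin L) := ⟨⟨0, hL⟩⟩
  set w : Fin n → ℝ := fun i => ∑ ℓ, if i ∈ N ℓ then μ ℓ else 0 with hw
  -- rewrite f
  have hfw : f = fun p : Fin n → ℝ => ∑ i, w i * (p i * Real.log (p i)) := by
    rw [hf]; funext p
    calc ∑ ℓ, μ ℓ * ∑ i ∈ N ℓ, p i * Real.log (p i)
        = ∑ ℓ, ∑ i, (if i ∈ N ℓ then μ ℓ * (p i * Real.log (p i)) else 0) := by
          refine Finset.sum_congr rfl fun ℓ _ => ?_
          rw [Finset.sum_ite_mem, Finset.univ_inter, Finset.mul_sum]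
      _ = ∑ i, ∑ ℓ, (if i ∈ N ℓ then μ ℓ * (p i * Real.log (p i)) else 0) := Finset.sum_comm
      _ = ∑ i, w i * (p i * Real.log (p i)) := by
          refine Finset.sum_congr rfl fun i _ => ?_
          rw [hw, Finset.sum_mul]
          exact Finset.sum_congr rfl fun ℓ _ => by rw [ite_mul, zero_mul]
  -- β ≤ w i
  have hβw : ∀ i, (⨅ ℓ, μ ℓ) ≤ w i := by
    intro i
    obtain ⟨ℓ₀, -, hi0⟩ := Finset.mem_biUnion.mp (hcover ▸ Finset.mem_univ i)
    have hwi : w i = μ ℓ₀ := by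
      have : (∑ ℓ, if i ∈ N ℓ then μ ℓ else 0) = (if i ∈ N ℓ₀ then μ ℓ₀ else 0) := by
        refine Finset.sum_eq_single ℓ₀ (fun ℓ _ hne => ?_)
          (fun habs => absurd (Finset.mem_univ ℓ₀) habs)
        rw [if_neg]
        intro hmem
        exact (Finset.disjoint_left.mp (hdisj ℓ ℓ₀ hne)) hmem hi0
      rw [hw]
      simpa [if_pos hi0] using this
    rw [hwi]
    exact ciInf_le (Set.Finite.bddBelow (Set.finite_range μ)) ℓ₀
  have hβ0 : 0 ≤ ⨅ ℓ, μ ℓ := le_ciInf fun ℓ => (hμ ℓ).1.le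
  -- second derivative
  rw [hfw, second_deriv_aux n w q h (fun i => (hq_pos i).ne')]
  -- Cauchy-Schwarz
  have hCS : (∑ i, |h i|) ^ 2 ≤ ∑ i, h i ^ 2 / q i := by
    have key := Finset.sum_mul_sq_le_sq_mul_sq Finset.univ
      (fun i => Real.sqrt (q i)) (fun i => |h i| / Real.sqrt (q i))
    have h1 : ∀ i : Fin n, Real.sqrt (q i) * (|h i| / Real.sqrt (q i)) = |h i| := fun i => by
      rw [mul_comm, div_mul_cancel₀ _ (Real.sqrt_pos.mpr (hq_pos i)).ne']
    have h2 : ∀ i : Fin n, Real.sqrt (q i) ^ 2 = q i := fun i => Real.sq_sqrt (hq_pos i).le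
    have h3 : ∀ i : Fin n, (|h i| / Real.sqrt (q i)) ^ 2 = h i ^ 2 / q i := fun i => by
      rw [div_pow, sq_abs, h2]
    calc (∑ i, |h i|) ^ 2
        = (∑ i, Real.sqrt (q i) * (|h i| / Real.sqrt (q i))) ^ 2 := by
          congr 1; exact Finset.sum_congr rfl fun i _ => (h1 i).symm
      _ ≤ (∑ i, Real.sqrt (q i) ^ 2) * ∑ i, (|h i| / Real.sqrt (q i)) ^ 2 := key
      _ = (∑ i, q i) * ∑ i, h i ^ 2 / q i := by
          congr 1
          · exact Finset.sum_congr rfl fun i _ => h2 i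
          · exact Finset.sum_congr rfl fun i _ => h3 i
      _ = ∑ i, h i ^ 2 / q i := by rw [hq_sum, one_mul]
  calc (⨅ ℓ, μ ℓ) * (∑ i, |h i|) ^ 2
      ≤ (⨅ ℓ, μ ℓ) * ∑ i, h i ^ 2 / q i := mul_le_mul_of_nonneg_left hCS hβ0
    _ = ∑ i, (⨅ ℓ, μ ℓ) * (h i ^ 2 / q i) := Finset.mul_sum _ _ _
    _ ≤ ∑ i, w i * (q i)⁻¹ * (h i * h i) := by
        refine Finset.sum_le_sum fun i _ => ?_
        have hpos : 0 ≤ h i ^ 2 / q i := div_nonneg (sq_nonneg _) (hq_pos i).le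
        calc (⨅ ℓ, μ ℓ) * (h i ^ 2 / q i) ≤ w i * (h i ^ 2 / q i) :=
              mul_le_mul_of_nonneg_right (hβw i) hpos
          _ = w i * (q i)⁻¹ * (h i * h i) := by rw [sq]; ring
end

section
/- The generalized entropy E⋆(q) = ∑_{ℓ=1}^{L} μ_ℓ ∑_{i ∈ N_ℓ} q^(i) ln q^(i) + ∑_{ℓ=1}^{L} (1 − μ_ℓ)(∑_{i ∈ N_ℓ} q^(i)) ln(∑_{i ∈ N_ℓ} q^(i)) is β-strongly convex on the simplex △ with respect to the ℓ₁ norm, where β = min_{1≤ℓ≤L} μ_ℓ; that is, for all q, q̄ ∈ △ and λ ∈ [0,1], E⋆(λq + (1−λ)q̄) ≤ λE⋆(q) + (1−λ)E⋆(q̄) − (β/2)λ(1−λ)‖q − q̄‖₁². -/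
open Real Finset



private lemma hasDerivF (r : ℝ) (hr : 0 < r) :
    HasDerivAt (fun r : ℝ => (r + 1) * Real.log r - 2 * (r - 1))
      (Real.log r + (r + 1) / r - 2) r := by
  have h1 : HasDerivAt (fun r : ℝ => (r + 1) * Real.log r)
      (1 * Real.log r + (r + 1) * r⁻¹) r :=
    ((hasDerivAt_id r).add_const 1).mul (Real.hasDerivAt_log hr.ne')
  have h2 : HasDerivAt (fun r : ℝ => 2 * (r - 1)) 2 r := by
    simpa using ((hasDerivAt_id r).sub_const 1).const_mul 2
  exact (h1.sub h2).congr_deriv (by ring)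

private lemma F_mono : MonotoneOn (fun r : ℝ => (r + 1) * Real.log r - 2 * (r - 1)) (Set.Ioi 0) := by
  apply monotoneOn_of_deriv_nonneg (convex_Ioi 0)
  · exact fun r hr => ((hasDerivF r hr).continuousAt).continuousWithinAt
  · intro r hr
    rw [interior_Ioi] at hr
    exact (hasDerivF r hr).differentiableAt.differentiableWithinAt
  · intro r hr
    rw [interior_Ioi] at hr
    rw [(hasDerivF r hr).deriv]
    have h1 : 1 - r⁻¹ ≤ Real.log r := Real.one_sub_inv_le_log_of_pos hr
    have h2 : (r + 1) / r = 1 + r⁻¹ := by rw [add_div, div_self hr.ne', one_div]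
    rw [h2]; linarith

private lemma F_sign_ge (r : ℝ) (hr : 1 ≤ r) : 0 ≤ (r + 1) * Real.log r - 2 * (r - 1) := by
  have := F_mono (Set.mem_Ioi.2 one_pos) (Set.mem_Ioi.2 (lt_of_lt_of_le one_pos hr)) hr
  simpa using this

private lemma F_sign_le (r : ℝ) (hr0 : 0 < r) (hr : r ≤ 1) :
    (r + 1) * Real.log r - 2 * (r - 1) ≤ 0 := by
  have := F_mono (Set.mem_Ioi.2 hr0) (Set.mem_Ioi.2 one_pos) hr
  simpa using this


private lemma hasDerivH (r : ℝ) (hr : 0 < r) :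
    HasDerivAt (fun r : ℝ => (r + 2) * (r * Real.log r - r + 1) - 3 / 2 * (r - 1) ^ 2)
      (2 * ((r + 1) * Real.log r - 2 * (r - 1))) r := by
  have hp : HasDerivAt (fun r : ℝ => r * Real.log r - r + 1) (Real.log r + 1 - 1) r :=
    ((Real.hasDerivAt_mul_log hr.ne').sub (hasDerivAt_id r)).add_const 1
  have h1 : HasDerivAt (fun r : ℝ => (r + 2) * (r * Real.log r - r + 1))
      (1 * (r * Real.log r - r + 1) + (r + 2) * (Real.log r + 1 - 1)) r :=
    ((hasDerivAt_id r).add_const 2).mul hp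
  have h2 : HasDerivAt (fun r : ℝ => 3 / 2 * (r - 1) ^ 2)
      (3 / 2 * (2 * (r - 1) ^ 1 * 1)) r :=
    (((hasDerivAt_id r).sub_const 1).pow 2).const_mul (3 / 2)
  exact (h1.sub h2).congr_deriv (by ring)

private lemma keyB (r : ℝ) (hr : 0 < r) :
    3 / 2 * (r - 1) ^ 2 ≤ (r + 2) * (r * Real.log r - r + 1) := by
  set h : ℝ → ℝ := fun r => (r + 2) * (r * Real.log r - r + 1) - 3 / 2 * (r - 1) ^ 2 with hh
  have h1 : h 1 = 0 := by simp [hh]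
  have hkey : 0 ≤ h r := by
    rcases le_or_gt 1 r with hcase | hcase
    · have hmono : MonotoneOn h (Set.Ici 1) := by
        apply monotoneOn_of_deriv_nonneg (convex_Ici 1)
        · exact fun x hx => ((hasDerivH x (lt_of_lt_of_le one_pos hx)).continuousAt).continuousWithinAt
        · intro x hx
          rw [interior_Ici] at hx
          exact (hasDerivH x (lt_trans one_pos hx)).differentiableAt.differentiableWithinAt
        · intro x hx
          rw [interior_Ici] at hx
          rw [(hasDerivH x (lt_trans one_pos hx)).deriv]
          have := F_sign_ge x hx.le
          linarith
      have := hmono (Set.mem_Ici.2 le_rfl) (Set.mem_Ici.2 hcase) hcase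
      rw [h1] at this; exact this
    · have hmono : AntitoneOn h (Set.Ioc 0 1) := by
        apply antitoneOn_of_deriv_nonpos (convex_Ioc 0 1)
        · exact fun x hx => ((hasDerivH x hx.1).continuousAt).continuousWithinAt
        · intro x hx
          have hx' : 0 < x := (interior_subset hx).1
          exact (hasDerivH x hx').differentiableAt.differentiableWithinAt
        · intro x hx
          rw [interior_Ioc] at hx
          rw [(hasDerivH x hx.1).deriv]
          have := F_sign_le x hx.1 hx.2.le
          linarith
      have := hmono (Set.mem_Ioc.2 ⟨hr, hcase.le⟩) (Set.mem_Ioc.2 ⟨one_pos, le_rfl⟩) hcase.le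
      rw [h1] at this; exact this
  simp only [hh] at hkey
  linarith
private lemma keyC (a b : ℝ) (ha : 0 ≤ a) (hb : 0 < b) :
    a - b + 3 / 2 * (a - b) ^ 2 / (a + 2 * b) ≤ a * Real.log a - a * Real.log b := by
  rcases ha.eq_or_lt with h | h
  · rw [← h]
    have h2 : 3 / 2 * (0 - b) ^ 2 / (0 + 2 * b) = 3 / 4 * b := by
      field_simp; ring
    rw [h2]
    have h3 : (0:ℝ) * Real.log 0 - 0 * Real.log b = 0 := by ring
    rw [h3]
    linarith
  · have hab : 0 < a + 2 * b := by linarith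
    set r : ℝ := a / b with hrd
    have hr : 0 < r := div_pos h hb
    have hbr : b * r = a := by rw [hrd]; field_simp
    have hB := keyB r hr
    have h2 : 3 / 2 * (a - b) ^ 2 ≤ (a + 2 * b) * (a * Real.log r - a + b) := by
      have hm := mul_le_mul_of_nonneg_left hB (mul_pos hb hb).le
      rw [← hbr]
      linear_combination hm
    have h3 : 3 / 2 * (a - b) ^ 2 / (a + 2 * b) ≤ a * Real.log r - a + b := by
      rw [div_le_iff₀ hab]
      linarith
    have hlog : a * Real.log r = a * Real.log a - a * Real.log b := by
      rw [hrd, Real.log_div h.ne' hb.ne']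
      ring
    linarith

private lemma pinsker {n : ℕ} (p m : Fin n → ℝ) (hp : ∀ i, 0 ≤ p i) (hm : ∀ i, 0 ≤ m i)
    (hps : ∑ i, p i = 1) (hms : ∑ i, m i = 1) (habs : ∀ i, m i = 0 → p i = 0) :
    1 / 2 * (∑ i, |p i - m i|) ^ 2 ≤ ∑ i, (p i * Real.log (p i) - p i * Real.log (m i)) := by
  classical
  set s : Finset (Fin n) := Finset.univ.filter (fun i => 0 < m i) with hs
  have hout : ∀ i ∈ Finset.univ, i ∉ s → p i = 0 ∧ m i = 0 := by
    intro i _ hi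
    have : ¬ 0 < m i := by simpa [hs] using hi
    have hmi : m i = 0 := le_antisymm (not_lt.1 this) (hm i)
    exact ⟨habs i hmi, hmi⟩
  have hms' : ∀ i ∈ s, 0 < m i := fun i hi => (Finset.mem_filter.1 hi).2
  have habs1 : ∑ i ∈ s, |p i - m i| = ∑ i, |p i - m i| :=
    Finset.sum_subset s.subset_univ (fun i hi hni => by
      obtain ⟨h1, h2⟩ := hout i hi hni; simp [h1, h2])
  have hkl1 : ∑ i ∈ s, (p i * Real.log (p i) - p i * Real.log (m i)) =
      ∑ i, (p i * Real.log (p i) - p i * Real.log (m i)) :=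
    Finset.sum_subset s.subset_univ (fun i hi hni => by
      obtain ⟨h1, h2⟩ := hout i hi hni; simp [h1, h2])
  have hpm0 : ∑ i ∈ s, (p i - m i) = 0 := by
    have : ∑ i ∈ s, (p i - m i) = ∑ i, (p i - m i) :=
      Finset.sum_subset s.subset_univ (fun i hi hni => by
        obtain ⟨h1, h2⟩ := hout i hi hni; simp [h1, h2])
    rw [this, Finset.sum_sub_distrib, hps, hms]
    ring
  have hg3 : ∑ i ∈ s, (p i + 2 * m i) = 3 := by
    have : ∑ i ∈ s, (p i + 2 * m i) = ∑ i, (p i + 2 * m i) :=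
      Finset.sum_subset s.subset_univ (fun i hi hni => by
        obtain ⟨h1, h2⟩ := hout i hi hni; simp [h1, h2])
    rw [this, Finset.sum_add_distrib, hps, ← Finset.mul_sum, hms]
    ring
  have hsed : (∑ i ∈ s, |p i - m i|) ^ 2 / (∑ i ∈ s, (p i + 2 * m i)) ≤
      ∑ i ∈ s, (p i - m i) ^ 2 / (p i + 2 * m i) := by
    have := Finset.sq_sum_div_le_sum_sq_div s (fun i => |p i - m i|)
      (g := fun i => p i + 2 * m i) (fun i hi => by have h1 := hms' i hi; have h2 := hp i; linarith)
    simpa [sq_abs] using this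
  have hstep : ∑ i ∈ s, (p i - m i + 3 / 2 * (p i - m i) ^ 2 / (p i + 2 * m i)) ≤
      ∑ i ∈ s, (p i * Real.log (p i) - p i * Real.log (m i)) :=
    Finset.sum_le_sum (fun i hi => keyC (p i) (m i) (hp i) (hms' i hi))
  have hsplit : ∑ i ∈ s, (p i - m i + 3 / 2 * (p i - m i) ^ 2 / (p i + 2 * m i)) =
      3 / 2 * ∑ i ∈ s, (p i - m i) ^ 2 / (p i + 2 * m i) := by
    rw [Finset.sum_add_distrib, hpm0, Finset.mul_sum]
    simp [mul_div_assoc]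
  rw [hg3, habs1] at hsed
  rw [hsplit] at hstep
  rw [← hkl1]
  nlinarith [hsed, hstep]
private lemma negent_sc {n : ℕ} (q qb : Fin n → ℝ) (hq0 : ∀ i, 0 ≤ q i) (hq1 : ∑ i, q i = 1)
    (hqb0 : ∀ i, 0 ≤ qb i) (hqb1 : ∑ i, qb i = 1) (t : ℝ) (ht0 : 0 < t) (ht1 : t < 1) :
    ∑ i, (t * q i + (1 - t) * qb i) * Real.log (t * q i + (1 - t) * qb i) ≤
      t * ∑ i, q i * Real.log (q i) + (1 - t) * ∑ i, qb i * Real.log (qb i)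
        - 1 / 2 * t * (1 - t) * (∑ i, |q i - qb i|) ^ 2 := by
  set m : Fin n → ℝ := fun i => t * q i + (1 - t) * qb i with hmd
  have hm0 : ∀ i, 0 ≤ m i := fun i => by
    have := hq0 i; have := hqb0 i; simp only [hmd]; nlinarith
  have hms : ∑ i, m i = 1 := by
    simp only [hmd, Finset.sum_add_distrib, ← Finset.mul_sum, hq1, hqb1]
    ring
  have habsq : ∀ i, m i = 0 → q i = 0 := by
    intro i hi
    have h1 : 0 ≤ t * q i := mul_nonneg ht0.le (hq0 i)
    have h2 : 0 ≤ (1 - t) * qb i := mul_nonneg (by linarith) (hqb0 i)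
    have h3 : t * q i = 0 := by simp only [hmd] at hi; linarith
    have := hq0 i
    nlinarith
  have habsqb : ∀ i, m i = 0 → qb i = 0 := by
    intro i hi
    have h1 : 0 ≤ t * q i := mul_nonneg ht0.le (hq0 i)
    have h2 : 0 ≤ (1 - t) * qb i := mul_nonneg (by linarith) (hqb0 i)
    have h3 : (1 - t) * qb i = 0 := by simp only [hmd] at hi; linarith
    have := hqb0 i
    nlinarith
  have hKL1 := pinsker q m hq0 hm0 hq1 hms habsq
  have hKL2 := pinsker qb m hqb0 hm0 hqb1 hms habsqb
  set D : ℝ := ∑ i, |q i - qb i| with hD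
  have hqm : ∑ i, |q i - m i| = (1 - t) * D := by
    rw [hD, Finset.mul_sum]
    apply Finset.sum_congr rfl
    intro i _
    have : q i - m i = (1 - t) * (q i - qb i) := by simp only [hmd]; ring
    rw [this, abs_mul, abs_of_nonneg (by linarith : (0:ℝ) ≤ 1 - t)]
  have hqbm : ∑ i, |qb i - m i| = t * D := by
    rw [hD, Finset.mul_sum]
    apply Finset.sum_congr rfl
    intro i _
    have : qb i - m i = -(t * (q i - qb i)) := by simp only [hmd]; ring
    rw [this, abs_neg, abs_mul, abs_of_nonneg ht0.le]
  rw [hqm] at hKL1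
  rw [hqbm] at hKL2
  have hident : ∑ i, m i * Real.log (m i) =
      t * ∑ i, q i * Real.log (m i) + (1 - t) * ∑ i, qb i * Real.log (m i) := by
    simp only [Finset.mul_sum, ← Finset.sum_add_distrib]
    apply Finset.sum_congr rfl
    intro i _
    simp only [hmd]
    ring
  have hs1 : ∑ i, (q i * Real.log (q i) - q i * Real.log (m i)) =
      ∑ i, q i * Real.log (q i) - ∑ i, q i * Real.log (m i) := Finset.sum_sub_distrib _ _
  have hs2 : ∑ i, (qb i * Real.log (qb i) - qb i * Real.log (m i)) =
      ∑ i, qb i * Real.log (qb i) - ∑ i, qb i * Real.log (m i) := Finset.sum_sub_distrib _ _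
  rw [hs1] at hKL1
  rw [hs2] at hKL2
  have hm1 := mul_le_mul_of_nonneg_left hKL1 ht0.le
  have hm2 := mul_le_mul_of_nonneg_left hKL2 (by linarith : (0:ℝ) ≤ 1 - t)
  show ∑ i, m i * Real.log (m i) ≤ _
  rw [hident]
  nlinarith [hm1, hm2]
theorem generalized_entropy_strongly_convex
    (n L : ℕ) (hL : 0 < L)
    (N : Fin L → Finset (Fin n)) (μ : Fin L → ℝ)
    (hμ : ∀ ℓ, 0 < μ ℓ ∧ μ ℓ ≤ 1)
    (hdisj : ∀ ℓ ℓ', ℓ ≠ ℓ' → Disjoint (N ℓ) (N ℓ'))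
    (hcover : Finset.univ.biUnion N = (Finset.univ : Finset (Fin n)))
    (Estar : (Fin n → ℝ) → ℝ)
    (hEstar : Estar = fun q => (∑ ℓ, μ ℓ * ∑ i ∈ N ℓ, q i * Real.log (q i)) +
      ∑ ℓ, (1 - μ ℓ) * ((∑ i ∈ N ℓ, q i) * Real.log (∑ i ∈ N ℓ, q i)))
    (β : ℝ) (hβ : β = ⨅ ℓ, μ ℓ)
    (q qb : Fin n → ℝ)
    (hq : (∀ i, 0 ≤ q i) ∧ ∑ i, q i = 1)
    (hqb : (∀ i, 0 ≤ qb i) ∧ ∑ i, qb i = 1)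
    (t : ℝ) (ht : t ∈ Set.Icc (0:ℝ) 1) :
    Estar (t • q + (1 - t) • qb) ≤
      t * Estar q + (1 - t) * Estar qb - β / 2 * t * (1 - t) * (∑ i, |q i - qb i|) ^ 2 := by
  obtain ⟨hq0, hq1⟩ := hq
  obtain ⟨hqb0, hqb1⟩ := hqb
  obtain ⟨ht0, ht1⟩ := ht
  rcases ht0.eq_or_lt with h0 | h0
  · have hfun : t • q + (1 - t) • qb = qb := by
      funext i; simp [← h0]
    rw [hfun, ← h0]
    simp
  rcases ht1.eq_or_lt with h1 | h1
  · have hfun : t • q + (1 - t) • qb = q := by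
      funext i; simp [h1]
    rw [hfun, h1]
    simp
  -- basic facts about β
  have hLne : Nonempty (Fin L) := ⟨⟨0, hL⟩⟩
  have hβle : ∀ ℓ, β ≤ μ ℓ := fun ℓ => hβ ▸ ciInf_le (Finite.bddBelow_range μ) ℓ
  have hβ0 : 0 ≤ β := hβ ▸ le_ciInf (fun ℓ => (hμ ℓ).1.le)
  -- partition
  have hpart : ∀ f : Fin n → ℝ, ∑ ℓ, ∑ i ∈ N ℓ, f i = ∑ i, f i := by
    intro f
    rw [← Finset.sum_biUnion (fun ℓ _ ℓ' _ hne => hdisj ℓ ℓ' hne), hcover]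
  -- decomposition of Estar
  have hdecomp : ∀ x : Fin n → ℝ, Estar x =
      β * (∑ i, x i * Real.log (x i))
      + (∑ ℓ, (μ ℓ - β) * ∑ i ∈ N ℓ, x i * Real.log (x i))
      + ∑ ℓ, (1 - μ ℓ) * ((∑ i ∈ N ℓ, x i) * Real.log (∑ i ∈ N ℓ, x i)) := by
    intro x
    rw [hEstar]
    dsimp only
    have h1 : ∑ ℓ, μ ℓ * (∑ i ∈ N ℓ, x i * Real.log (x i)) =
        β * (∑ ℓ, ∑ i ∈ N ℓ, x i * Real.log (x i))
        + ∑ ℓ, (μ ℓ - β) * ∑ i ∈ N ℓ, x i * Real.log (x i) := by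
      rw [Finset.mul_sum, ← Finset.sum_add_distrib]
      exact Finset.sum_congr rfl (fun ℓ _ => by ring)
    rw [h1, hpart (fun i => x i * Real.log (x i))]
  -- pointwise convexity of x log x
  have hconv : ∀ x y : ℝ, 0 ≤ x → 0 ≤ y →
      (t * x + (1 - t) * y) * Real.log (t * x + (1 - t) * y) ≤
        t * (x * Real.log x) + (1 - t) * (y * Real.log y) := by
    intro x y hx hy
    have h := Real.convexOn_mul_log.2 (Set.mem_Ici.2 hx) (Set.mem_Ici.2 hy)
      h0.le (by linarith : (0:ℝ) ≤ 1 - t) (by ring)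
    simpa [smul_eq_mul] using h
  set x : Fin n → ℝ := t • q + (1 - t) • qb with hx
  have hmke : ∀ i, x i = t * q i + (1 - t) * qb i := fun i => by
    simp [hx, Pi.add_apply, Pi.smul_apply, smul_eq_mul]
  -- entropy strong convexity part
  have hE := negent_sc q qb hq0 hq1 hqb0 hqb1 t h0 h1
  have e1 : ∑ i, x i * Real.log (x i) =
      ∑ i, (t * q i + (1 - t) * qb i) * Real.log (t * q i + (1 - t) * qb i) :=
    Finset.sum_congr rfl (fun i _ => by rw [hmke i])
  -- block convexity, per-index part
  have hblocksum : ∀ ℓ, ∑ i ∈ N ℓ, x i * Real.log (x i) ≤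
      t * ∑ i ∈ N ℓ, q i * Real.log (q i) + (1 - t) * ∑ i ∈ N ℓ, qb i * Real.log (qb i) := by
    intro ℓ
    calc ∑ i ∈ N ℓ, x i * Real.log (x i)
        ≤ ∑ i ∈ N ℓ, (t * (q i * Real.log (q i)) + (1 - t) * (qb i * Real.log (qb i))) := by
          apply Finset.sum_le_sum
          intro i _
          rw [hmke i]
          exact hconv _ _ (hq0 i) (hqb0 i)
      _ = _ := by rw [Finset.sum_add_distrib, ← Finset.mul_sum, ← Finset.mul_sum]
  have hR1 : ∑ ℓ, (μ ℓ - β) * ∑ i ∈ N ℓ, x i * Real.log (x i) ≤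
      t * ∑ ℓ, (μ ℓ - β) * ∑ i ∈ N ℓ, q i * Real.log (q i)
      + (1 - t) * ∑ ℓ, (μ ℓ - β) * ∑ i ∈ N ℓ, qb i * Real.log (qb i) := by
    calc ∑ ℓ, (μ ℓ - β) * ∑ i ∈ N ℓ, x i * Real.log (x i)
        ≤ ∑ ℓ, (μ ℓ - β) * (t * ∑ i ∈ N ℓ, q i * Real.log (q i)
            + (1 - t) * ∑ i ∈ N ℓ, qb i * Real.log (qb i)) := by
          apply Finset.sum_le_sum
          intro ℓ _
          exact mul_le_mul_of_nonneg_left (hblocksum ℓ) (sub_nonneg.2 (hβle ℓ))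
      _ = _ := by
          rw [Finset.mul_sum, Finset.mul_sum, ← Finset.sum_add_distrib]
          exact Finset.sum_congr rfl (fun ℓ _ => by ring)
  -- block sums are linear
  have hS : ∀ ℓ, ∑ i ∈ N ℓ, x i =
      t * (∑ i ∈ N ℓ, q i) + (1 - t) * (∑ i ∈ N ℓ, qb i) := by
    intro ℓ
    rw [Finset.mul_sum, Finset.mul_sum, ← Finset.sum_add_distrib]
    exact Finset.sum_congr rfl (fun i _ => hmke i)
  have hR2 : ∑ ℓ, (1 - μ ℓ) * ((∑ i ∈ N ℓ, x i) * Real.log (∑ i ∈ N ℓ, x i)) ≤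
      t * ∑ ℓ, (1 - μ ℓ) * ((∑ i ∈ N ℓ, q i) * Real.log (∑ i ∈ N ℓ, q i))
      + (1 - t) * ∑ ℓ, (1 - μ ℓ) * ((∑ i ∈ N ℓ, qb i) * Real.log (∑ i ∈ N ℓ, qb i)) := by
    calc ∑ ℓ, (1 - μ ℓ) * ((∑ i ∈ N ℓ, x i) * Real.log (∑ i ∈ N ℓ, x i))
        ≤ ∑ ℓ, (1 - μ ℓ) * (t * ((∑ i ∈ N ℓ, q i) * Real.log (∑ i ∈ N ℓ, q i))
            + (1 - t) * ((∑ i ∈ N ℓ, qb i) * Real.log (∑ i ∈ N ℓ, qb i))) := by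
          apply Finset.sum_le_sum
          intro ℓ _
          apply mul_le_mul_of_nonneg_left _ (by linarith [(hμ ℓ).2] : (0:ℝ) ≤ 1 - μ ℓ)
          rw [hS ℓ]
          exact hconv _ _ (Finset.sum_nonneg (fun i _ => hq0 i))
            (Finset.sum_nonneg (fun i _ => hqb0 i))
      _ = _ := by
          rw [Finset.mul_sum, Finset.mul_sum, ← Finset.sum_add_distrib]
          exact Finset.sum_congr rfl (fun ℓ _ => by ring)
  rw [hdecomp x, hdecomp q, hdecomp qb, e1]
  have hA := mul_le_mul_of_nonneg_left hE hβ0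
  rw [← e1] at hA
  nlinarith [hA, hR1, hR2]
end

section
/- The nested logit surplus function E(v) = ln(∑_{ℓ=1}^{L} (∑_{i ∈ N_ℓ} e^{v^(i)/μ_ℓ})^{μ_ℓ}) is strongly smooth with respect to the ℓ∞ norm with modulus B = 1/min_{1≤ℓ≤L} μ_ℓ, i.e., ‖∇E(v) − ∇E(v̄)‖₁ ≤ B‖v − v̄‖∞ for all v, v̄ ∈ ℝⁿ. -/
open Real Finset

namespace NLSS
variable {n L : ℕ} {ι : Type*}

/-- weighted exponential sum along the line t ↦ v + t d -/
noncomputable def W (N : Fin L → Finset (Fin n)) (μ : Fin L → ℝ) (v d : Fin n → ℝ)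
    (c : Fin n → ℝ) (k : Fin L) (t : ℝ) : ℝ :=
  ∑ j ∈ N k, c j * Real.exp ((v j + t * d j) / μ k)

lemma hasDerivAt_W (N : Fin L → Finset (Fin n)) (μ : Fin L → ℝ) (v d c : Fin n → ℝ)
    (k : Fin L) (t : ℝ) :
    HasDerivAt (W N μ v d c k) (W N μ v d (fun j => c j * d j) k t / μ k) t := by
  have : (W N μ v d (fun j => c j * d j) k t / μ k)
      = ∑ j ∈ N k, c j * (Real.exp ((v j + t * d j) / μ k) * (d j / μ k)) := by
    rw [W, Finset.sum_div]
    exact Finset.sum_congr rfl (fun j _ => by ring)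
  rw [this]
  apply HasDerivAt.fun_sum
  intro j _
  have h1 : HasDerivAt (fun t : ℝ => (v j + t * d j) / μ k) (d j / μ k) t := by
    have := ((hasDerivAt_id t).const_mul (d j)).const_add (v j)
    simpa [mul_comm] using this.div_const (μ k)
  exact ((h1.exp).const_mul (c j))

/-- T along the line -/
noncomputable def Tl (N : Fin L → Finset (Fin n)) (μ : Fin L → ℝ) (v d : Fin n → ℝ)
    (t : ℝ) : ℝ :=
  ∑ k, (W N μ v d 1 k t) ^ (μ k)

lemma W_one (N : Fin L → Finset (Fin n)) (μ : Fin L → ℝ) (v d : Fin n → ℝ)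
    (k : Fin L) (t : ℝ) : W N μ v d 1 k t = ∑ j ∈ N k, Real.exp ((v j + t * d j) / μ k) := by
  simp [W]

lemma W_one_nonneg (N : Fin L → Finset (Fin n)) (μ : Fin L → ℝ) (v d : Fin n → ℝ)
    (k : Fin L) (t : ℝ) : 0 ≤ W N μ v d 1 k t := by
  rw [W_one]; exact Finset.sum_nonneg fun j _ => (Real.exp_pos _).le

lemma W_one_pos (N : Fin L → Finset (Fin n)) (μ : Fin L → ℝ) (v d : Fin n → ℝ)
    (k : Fin L) (t : ℝ) (hk : (N k).Nonempty) : 0 < W N μ v d 1 k t := by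
  rw [W_one]; exact Finset.sum_pos (fun j _ => Real.exp_pos _) hk

lemma W_empty (N : Fin L → Finset (Fin n)) (μ : Fin L → ℝ) (v d c : Fin n → ℝ)
    (k : Fin L) (t : ℝ) (hk : N k = ∅) : W N μ v d c k t = 0 := by
  simp [W, hk]

lemma hasDerivAt_Wpow (N : Fin L → Finset (Fin n)) (μ : Fin L → ℝ)
    (hμ : ∀ k, 0 < μ k ∧ μ k ≤ 1) (v d : Fin n → ℝ) (k : Fin L) (t : ℝ) :
    HasDerivAt (fun t => (W N μ v d 1 k t) ^ (μ k))
      (W N μ v d d k t * (W N μ v d 1 k t) ^ (μ k - 1)) t := by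
  rcases (N k).eq_empty_or_nonempty with hk | hk
  · have h0 : (fun t => (W N μ v d 1 k t) ^ (μ k)) = fun _ => (0:ℝ) ^ (μ k) := by
      funext t; rw [W_empty N μ v d 1 k t hk]
    rw [h0, W_empty N μ v d d k t hk, zero_mul]
    exact hasDerivAt_const t _
  · have hW := hasDerivAt_W N μ v d 1 k t
    have hne : W N μ v d 1 k t ≠ 0 := (W_one_pos N μ v d k t hk).ne'
    have := hW.rpow_const (p := μ k) (Or.inl hne)
    have heq : W N μ v d (fun j => (1:Fin n → ℝ) j * d j) k t / μ k * μ k *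
        W N μ v d 1 k t ^ (μ k - 1) = W N μ v d d k t * (W N μ v d 1 k t) ^ (μ k - 1) := by
      have hd : W N μ v d (fun j => (1:Fin n → ℝ) j * d j) k t = W N μ v d d k t := by
        simp [W]
      rw [hd, div_mul_cancel₀ _ (hμ k).1.ne']
    rw [← heq]; exact this

lemma hasDerivAt_Tl (N : Fin L → Finset (Fin n)) (μ : Fin L → ℝ)
    (hμ : ∀ k, 0 < μ k ∧ μ k ≤ 1) (v d : Fin n → ℝ) (t : ℝ) :
    HasDerivAt (Tl N μ v d)
      (∑ k, W N μ v d d k t * (W N μ v d 1 k t) ^ (μ k - 1)) t :=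
  HasDerivAt.fun_sum (fun k _ => hasDerivAt_Wpow N μ hμ v d k t)

lemma Tl_pos (N : Fin L → Finset (Fin n)) (μ : Fin L → ℝ)
    (hμ : ∀ k, 0 < μ k ∧ μ k ≤ 1) (v d : Fin n → ℝ) (t : ℝ)
    (hex : ∃ k, (N k).Nonempty) : 0 < Tl N μ v d t := by
  obtain ⟨k0, hk0⟩ := hex
  have h1 : (0:ℝ) < (W N μ v d 1 k0 t) ^ (μ k0) :=
    Real.rpow_pos_of_pos (W_one_pos N μ v d k0 t hk0) _
  exact Finset.sum_pos' (fun k _ => Real.rpow_nonneg (W_one_nonneg N μ v d k t) _)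
    ⟨k0, Finset.mem_univ k0, h1⟩

lemma hasDerivAt_logTl (N : Fin L → Finset (Fin n)) (μ : Fin L → ℝ)
    (hμ : ∀ k, 0 < μ k ∧ μ k ≤ 1) (v d : Fin n → ℝ) (t : ℝ)
    (hex : ∃ k, (N k).Nonempty) :
    HasDerivAt (fun t => Real.log (Tl N μ v d t))
      ((∑ k, W N μ v d d k t * (W N μ v d 1 k t) ^ (μ k - 1)) / Tl N μ v d t) t :=
  (hasDerivAt_Tl N μ hμ v d t).log (Tl_pos N μ hμ v d t hex).ne'


noncomputable def As (N : Fin L → Finset (Fin n)) (μ : Fin L → ℝ) (k : Fin L)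
    (v : Fin n → ℝ) : ℝ := ∑ j ∈ N k, Real.exp (v j / μ k)

noncomputable def Ts (N : Fin L → Finset (Fin n)) (μ : Fin L → ℝ) (v : Fin n → ℝ) : ℝ :=
  ∑ k, As N μ k v ^ μ k

noncomputable def gd (N : Fin L → Finset (Fin n)) (μ : Fin L → ℝ) (i : Fin n)
    (v : Fin n → ℝ) : ℝ :=
  (∑ k, if i ∈ N k then Real.exp (v i / μ k) * As N μ k v ^ (μ k - 1) else 0) / Ts N μ v

lemma W_line (N : Fin L → Finset (Fin n)) (μ : Fin L → ℝ) (v d c : Fin n → ℝ)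
    (k : Fin L) (t : ℝ) :
    W N μ v d c k t = ∑ j ∈ N k, c j * Real.exp ((v + t • d) j / μ k) := by
  simp [W, Pi.add_apply, Pi.smul_apply, smul_eq_mul]

lemma W_one_line (N : Fin L → Finset (Fin n)) (μ : Fin L → ℝ) (v d : Fin n → ℝ)
    (k : Fin L) (t : ℝ) : W N μ v d 1 k t = As N μ k (v + t • d) := by
  rw [W_line]; simp [As]

lemma As_pos (N : Fin L → Finset (Fin n)) (μ : Fin L → ℝ) (k : Fin L) (v : Fin n → ℝ)
    (hk : (N k).Nonempty) : 0 < As N μ k v :=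
  Finset.sum_pos (fun j _ => Real.exp_pos _) hk

lemma As_nonneg (N : Fin L → Finset (Fin n)) (μ : Fin L → ℝ) (k : Fin L) (v : Fin n → ℝ) :
    0 ≤ As N μ k v := Finset.sum_nonneg fun j _ => (Real.exp_pos _).le

lemma Ts_pos (N : Fin L → Finset (Fin n)) (μ : Fin L → ℝ) (v : Fin n → ℝ)
    (hex : ∃ k, (N k).Nonempty) : 0 < Ts N μ v := by
  obtain ⟨k0, hk0⟩ := hex
  exact Finset.sum_pos' (fun k _ => Real.rpow_nonneg (As_nonneg N μ k v) _)
    ⟨k0, Finset.mem_univ k0, Real.rpow_pos_of_pos (As_pos N μ k0 v hk0) _⟩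

lemma differentiableAt_As (N : Fin L → Finset (Fin n)) (μ : Fin L → ℝ) (k : Fin L)
    (v : Fin n → ℝ) : DifferentiableAt ℝ (As N μ k) v := by
  unfold As; fun_prop

lemma differentiableAt_E (N : Fin L → Finset (Fin n)) (μ : Fin L → ℝ)
    (hμ : ∀ k, 0 < μ k ∧ μ k ≤ 1) (v : Fin n → ℝ) (hex : ∃ k, (N k).Nonempty) :
    DifferentiableAt ℝ (fun v => Real.log (Ts N μ v)) v := by
  have hT : DifferentiableAt ℝ (Ts N μ) v := by
    unfold Ts
    apply DifferentiableAt.fun_sum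
    intro k _
    rcases (N k).eq_empty_or_nonempty with hk | hk
    · have : (fun v : Fin n → ℝ => As N μ k v ^ μ k) = fun _ => (0:ℝ) ^ μ k := by
        funext w; simp [As, hk]
      rw [this]; exact differentiableAt_const _
    · exact (differentiableAt_As N μ k v).rpow_const (Or.inl (As_pos N μ k v hk).ne')
  exact hT.log (Ts_pos N μ v hex).ne'


lemma Tl_line (N : Fin L → Finset (Fin n)) (μ : Fin L → ℝ) (v d : Fin n → ℝ)
    (t : ℝ) : Tl N μ v d t = Ts N μ (v + t • d) := by
  unfold Tl Ts; exact Finset.sum_congr rfl fun k _ => by rw [W_one_line]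

lemma fderiv_single (N : Fin L → Finset (Fin n)) (μ : Fin L → ℝ)
    (hμ : ∀ k, 0 < μ k ∧ μ k ≤ 1) (v : Fin n → ℝ) (hex : ∃ k, (N k).Nonempty)
    (i : Fin n) :
    fderiv ℝ (fun v => Real.log (Ts N μ v)) v (Pi.single i 1) = gd N μ i v := by
  have hc : HasDerivAt (fun t : ℝ => v + t • (Pi.single i 1 : Fin n → ℝ))
      (Pi.single i 1) (0:ℝ) := by
    simpa using ((hasDerivAt_id (0:ℝ)).smul_const (Pi.single i 1 : Fin n → ℝ)).const_add v
  have hdiff := differentiableAt_E N μ hμ v hex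
  have h0 : v + (0:ℝ) • (Pi.single i 1 : Fin n → ℝ) = v := by simp
  have hf : HasFDerivAt (fun v => Real.log (Ts N μ v))
      (fderiv ℝ (fun v => Real.log (Ts N μ v)) v) (v + (0:ℝ) • (Pi.single i 1 : Fin n → ℝ)) := by
    rw [h0]; exact hdiff.hasFDerivAt
  have h1 : HasDerivAt ((fun v => Real.log (Ts N μ v)) ∘ fun t : ℝ => v + t • (Pi.single i 1 : Fin n → ℝ))
      (fderiv ℝ (fun v => Real.log (Ts N μ v)) v (Pi.single i 1)) (0:ℝ) :=
    hf.comp_hasDerivAt _ hc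
  set d : Fin n → ℝ := Pi.single i 1 with hd
  have heq : ((fun v => Real.log (Ts N μ v)) ∘ fun t : ℝ => v + t • d)
      = fun t => Real.log (Tl N μ v d t) := by
    funext t; simp only [Function.comp_apply, Tl_line]
  have h2 : HasDerivAt ((fun v => Real.log (Ts N μ v)) ∘ fun t : ℝ => v + t • d)
      ((∑ k, W N μ v d d k 0 * (W N μ v d 1 k 0) ^ (μ k - 1)) / Tl N μ v d 0) (0:ℝ) := by
    rw [heq]; exact hasDerivAt_logTl N μ hμ v d 0 hex
  have huniq := h1.unique h2
  rw [huniq, gd]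
  have hT0 : Tl N μ v d 0 = Ts N μ v := by rw [Tl_line, h0]
  rw [hT0]
  congr 1
  refine Finset.sum_congr rfl fun k _ => ?_
  have hW1 : W N μ v d 1 k 0 = As N μ k v := by rw [W_one_line, h0]
  have hWd : W N μ v d d k 0 = if i ∈ N k then Real.exp (v i / μ k) else 0 := by
    rw [W, hd]
    have : ∀ j ∈ N k, (Pi.single i 1 : Fin n → ℝ) j * Real.exp ((v j + 0 * (Pi.single i 1 : Fin n → ℝ) j) / μ k)
        = if j = i then Real.exp (v j / μ k) else 0 := by
      intro j _
      rcases eq_or_ne j i with h | h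
      · simp [h, Pi.single_apply]
      · simp [Pi.single_apply, h]
    rw [Finset.sum_congr rfl this, Finset.sum_ite_eq' (N k) i (fun j => Real.exp (v j / μ k))]
  rw [hW1, hWd, ite_mul, zero_mul]


/-- derivative value of the numerator term for nest k -/
noncomputable def DD (N : Fin L → Finset (Fin n)) (μ : Fin L → ℝ) (v d s : Fin n → ℝ)
    (k : Fin L) (t : ℝ) : ℝ :=
  (W N μ v d (fun j => s j * d j) k t / μ k) * (W N μ v d 1 k t) ^ (μ k - 1)
    + W N μ v d s k t *
      ((W N μ v d d k t / μ k) * ((μ k - 1) * (W N μ v d 1 k t) ^ (μ k - 1 - 1)))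

lemma hasDerivAt_Gnum (N : Fin L → Finset (Fin n)) (μ : Fin L → ℝ)
    (hμ : ∀ k, 0 < μ k ∧ μ k ≤ 1) (v d s : Fin n → ℝ) (k : Fin L) (t : ℝ) :
    HasDerivAt (fun t => W N μ v d s k t * (W N μ v d 1 k t) ^ (μ k - 1))
      (DD N μ v d s k t) t := by
  rcases (N k).eq_empty_or_nonempty with hk | hk
  · have h0 : (fun t => W N μ v d s k t * (W N μ v d 1 k t) ^ (μ k - 1)) = fun _ => (0:ℝ) := by
      funext t; rw [W_empty N μ v d s k t hk, zero_mul]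
    have h1 : DD N μ v d s k t = 0 := by
      rw [DD, W_empty N μ v d s k t hk, W_empty N μ v d _ k t hk,
        W_empty N μ v d d k t hk]
      ring
    rw [h0, h1]; exact hasDerivAt_const t _
  · have hne : W N μ v d 1 k t ≠ 0 := (W_one_pos N μ v d k t hk).ne'
    have hrp := (hasDerivAt_W N μ v d 1 k t).rpow_const (p := μ k - 1) (Or.inl hne)
    have hmul := (hasDerivAt_W N μ v d s k t).fun_mul hrp
    have : W N μ v d s k t *
        (W N μ v d (fun j => (1:Fin n → ℝ) j * d j) k t / μ k * (μ k - 1) *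
          W N μ v d 1 k t ^ (μ k - 1 - 1))
        + W N μ v d (fun j => s j * d j) k t / μ k * W N μ v d 1 k t ^ (μ k - 1)
        = DD N μ v d s k t := by
      have hd : W N μ v d (fun j => (1:Fin n → ℝ) j * d j) k t = W N μ v d d k t := by
        simp [W]
      rw [hd, DD]; ring
    rw [← this]
    rw [add_comm]
    exact hmul
  
noncomputable def Hval (N : Fin L → Finset (Fin n)) (μ : Fin L → ℝ) (v d s : Fin n → ℝ)
    (t : ℝ) : ℝ :=
  ((∑ k, DD N μ v d s k t) * Tl N μ v d t
    - (∑ k, W N μ v d s k t * (W N μ v d 1 k t) ^ (μ k - 1)) *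
      (∑ k, W N μ v d d k t * (W N μ v d 1 k t) ^ (μ k - 1))) / (Tl N μ v d t) ^ 2

lemma sum_gd_line (N : Fin L → Finset (Fin n)) (μ : Fin L → ℝ) (v d s : Fin n → ℝ)
    (t : ℝ) :
    ∑ i, s i * gd N μ i (v + t • d)
      = (∑ k, W N μ v d s k t * (W N μ v d 1 k t) ^ (μ k - 1)) / Tl N μ v d t := by
  rw [Tl_line]
  unfold gd
  have h1 : ∀ i : Fin n, s i * ((∑ k, if i ∈ N k then
        Real.exp ((v + t • d) i / μ k) * As N μ k (v + t • d) ^ (μ k - 1) else 0)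
        / Ts N μ (v + t • d))
      = (∑ k, if i ∈ N k then
          s i * (Real.exp ((v + t • d) i / μ k) * As N μ k (v + t • d) ^ (μ k - 1)) else 0)
        / Ts N μ (v + t • d) := by
    intro i
    rw [← mul_div_assoc, Finset.mul_sum]
    congr 1
    exact Finset.sum_congr rfl fun k _ => by rw [mul_ite, mul_zero]
  rw [Finset.sum_congr rfl (fun i _ => h1 i), ← Finset.sum_div]
  congr 1
  rw [Finset.sum_comm]
  refine Finset.sum_congr rfl fun k _ => ?_
  rw [Finset.sum_ite_mem, Finset.univ_inter, W, W_one_line, Finset.sum_mul]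
  refine Finset.sum_congr rfl fun i _ => ?_
  have : (v + t • d) i = v i + t * d i := by simp
  rw [this]; ring

lemma hasDerivAt_sumgd (N : Fin L → Finset (Fin n)) (μ : Fin L → ℝ)
    (hμ : ∀ k, 0 < μ k ∧ μ k ≤ 1) (v d s : Fin n → ℝ) (t : ℝ)
    (hex : ∃ k, (N k).Nonempty) :
    HasDerivAt (fun t => ∑ i, s i * gd N μ i (v + t • d)) (Hval N μ v d s t) t := by
  have heq : (fun t => ∑ i, s i * gd N μ i (v + t • d))
      = fun t => (∑ k, W N μ v d s k t * (W N μ v d 1 k t) ^ (μ k - 1)) / Tl N μ v d t := by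
    funext t; exact sum_gd_line N μ v d s t
  rw [heq]
  have hnum : HasDerivAt (fun t => ∑ k, W N μ v d s k t * (W N μ v d 1 k t) ^ (μ k - 1))
      (∑ k, DD N μ v d s k t) t :=
    HasDerivAt.fun_sum (fun k _ => hasDerivAt_Gnum N μ hμ v d s k t)
  exact hnum.div (hasDerivAt_Tl N μ hμ v d t) (Tl_pos N μ hμ v d t hex).ne'


lemma cov_eq (F : Finset ι) (q x y : ι → ℝ) (h1 : ∑ i ∈ F, q i = 1) :
    ∑ i ∈ F, q i * (x i - ∑ j ∈ F, q j * x j) * (y i - ∑ j ∈ F, q j * y j)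
      = ∑ i ∈ F, q i * x i * y i - (∑ i ∈ F, q i * x i) * (∑ i ∈ F, q i * y i) := by
  set mx := ∑ j ∈ F, q j * x j with hmx
  set my := ∑ j ∈ F, q j * y j with hmy
  have expand : ∀ i ∈ F, q i * (x i - mx) * (y i - my)
      = q i * x i * y i - my * (q i * x i) - mx * (q i * y i) + (mx * my) * q i := by
    intro i _; ring
  rw [Finset.sum_congr rfl expand]
  rw [Finset.sum_add_distrib, Finset.sum_sub_distrib, Finset.sum_sub_distrib,
    ← Finset.mul_sum, ← Finset.mul_sum, ← Finset.mul_sum, h1, ← hmx, ← hmy]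
  ring

lemma var_nonneg (F : Finset ι) (q x : ι → ℝ) (hq : ∀ i ∈ F, 0 ≤ q i)
    (h1 : ∑ i ∈ F, q i = 1) :
    0 ≤ ∑ i ∈ F, q i * x i * x i - (∑ i ∈ F, q i * x i) ^ 2 := by
  have := cov_eq F q x x h1
  rw [sq]
  rw [← this]
  exact Finset.sum_nonneg fun i hi => by
    have := hq i hi
    have h2 : q i * (x i - ∑ j ∈ F, q j * x j) * (x i - ∑ j ∈ F, q j * x j)
        = q i * (x i - ∑ j ∈ F, q j * x j) ^ 2 := by ring
    rw [h2]; positivity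

lemma mean_sq_le (F : Finset ι) (q x : ι → ℝ) (hq : ∀ i ∈ F, 0 ≤ q i)
    (h1 : ∑ i ∈ F, q i = 1) (M : ℝ) (hx : ∀ i ∈ F, x i ^ 2 ≤ M) :
    ∑ i ∈ F, q i * x i * x i ≤ M := by
  calc ∑ i ∈ F, q i * x i * x i ≤ ∑ i ∈ F, q i * M := by
        refine Finset.sum_le_sum fun i hi => ?_
        have h2 : q i * x i * x i = q i * x i ^ 2 := by ring
        rw [h2]
        exact mul_le_mul_of_nonneg_left (hx i hi) (hq i hi)
    _ = M := by rw [← Finset.sum_mul, h1, one_mul]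

lemma amgm_abs (u v D : ℝ) (hD : 0 < D) :
    |u| * |v| ≤ (D * u ^ 2 + v ^ 2 / D) / 2 := by
  have key : 2 * D * (|u| * |v|) ≤ D ^ 2 * u ^ 2 + v ^ 2 := by
    nlinarith [sq_nonneg (D * |u| - |v|), sq_abs u, sq_abs v]
  have h2 : |u| * |v| = (2 * D * (|u| * |v|)) / (2 * D) := by field_simp
  rw [h2, div_le_iff₀ (by positivity : (0:ℝ) < 2 * D)]
  have h3 : (D * u ^ 2 + v ^ 2 / D) / 2 * (2 * D) = D ^ 2 * u ^ 2 + v ^ 2 := by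
    field_simp
  rw [h3]; exact key

lemma cov_bound (F : Finset ι) (q x y : ι → ℝ) (hq : ∀ i ∈ F, 0 ≤ q i)
    (h1 : ∑ i ∈ F, q i = 1) (D : ℝ) (hD : 0 < D) :
    |∑ i ∈ F, q i * x i * y i - (∑ i ∈ F, q i * x i) * (∑ i ∈ F, q i * y i)|
      ≤ (D * (∑ i ∈ F, q i * x i * x i - (∑ i ∈ F, q i * x i) ^ 2)
        + (∑ i ∈ F, q i * y i * y i - (∑ i ∈ F, q i * y i) ^ 2) / D) / 2 := by
  rw [← cov_eq F q x y h1]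
  set mx := ∑ j ∈ F, q j * x j with hmxdef
  set my := ∑ j ∈ F, q j * y j with hmydef
  have hx2 : ∑ i ∈ F, q i * (x i - mx) * (x i - mx)
      = ∑ i ∈ F, q i * x i * x i - mx ^ 2 := by
    rw [cov_eq F q x x h1, sq]
  have hy2 : ∑ i ∈ F, q i * (y i - my) * (y i - my)
      = ∑ i ∈ F, q i * y i * y i - my ^ 2 := by
    rw [cov_eq F q y y h1, sq]
  calc |∑ i ∈ F, q i * (x i - mx) * (y i - my)|
      ≤ ∑ i ∈ F, q i * ((D * (x i - mx) ^ 2 + (y i - my) ^ 2 / D) / 2) := by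
        refine (Finset.abs_sum_le_sum_abs _ _).trans (Finset.sum_le_sum fun i hi => ?_)
        rw [abs_mul, abs_mul, abs_of_nonneg (hq i hi), mul_assoc]
        exact mul_le_mul_of_nonneg_left (amgm_abs _ _ _ hD) (hq i hi)
    _ = (D * (∑ i ∈ F, q i * (x i - mx) * (x i - mx))
          + (∑ i ∈ F, q i * (y i - my) * (y i - my)) / D) / 2 := by
        rw [Finset.sum_congr rfl (fun i _ => (by ring :
          q i * ((D * (x i - mx) ^ 2 + (y i - my) ^ 2 / D) / 2)
            = D * (q i * (x i - mx) * (x i - mx)) / 2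
              + q i * (y i - my) * (y i - my) / D / 2))]
        rw [Finset.sum_add_distrib, ← Finset.sum_div, ← Finset.sum_div, ← Finset.sum_div,
          ← Finset.mul_sum]
        ring
    _ = (D * (∑ i ∈ F, q i * x i * x i - mx ^ 2)
          + (∑ i ∈ F, q i * y i * y i - my ^ 2) / D) / 2 := by
        rw [hx2, hy2]


/-- normalized within-nest mean of weight x -/
noncomputable def Mn (N : Fin L → Finset (Fin n)) (μ : Fin L → ℝ) (v d : Fin n → ℝ)
    (x : Fin n → ℝ) (k : Fin L) (t : ℝ) : ℝ := W N μ v d x k t / W N μ v d 1 k t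

/-- nest probability -/
noncomputable def Pa (N : Fin L → Finset (Fin n)) (μ : Fin L → ℝ) (v d : Fin n → ℝ)
    (k : Fin L) (t : ℝ) : ℝ := (W N μ v d 1 k t) ^ (μ k) / Tl N μ v d t

section perNest
variable (N : Fin L → Finset (Fin n)) (μ : Fin L → ℝ) (v d : Fin n → ℝ) (t : ℝ)
  (k : Fin L)

lemma W_one_eq :
    W N μ v d 1 k t = ∑ j ∈ N k, Real.exp ((v j + t * d j) / μ k) := by
  rw [W]; exact Finset.sum_congr rfl fun j _ => by simp

lemma q_sum_one (hk : (N k).Nonempty) :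
    ∑ j ∈ N k, Real.exp ((v j + t * d j) / μ k) / W N μ v d 1 k t = 1 := by
  rw [← Finset.sum_div, ← W_one_eq]
  exact div_self (W_one_pos N μ v d k t hk).ne'

lemma q_sum_x (x : Fin n → ℝ) :
    ∑ j ∈ N k, (Real.exp ((v j + t * d j) / μ k) / W N μ v d 1 k t) * x j
      = Mn N μ v d x k t := by
  show _ = (∑ j ∈ N k, x j * Real.exp ((v j + t * d j) / μ k)) / W N μ v d 1 k t
  rw [Finset.sum_div]
  exact Finset.sum_congr rfl fun j _ => by ring

lemma q_sum_xy (x y : Fin n → ℝ) :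
    ∑ j ∈ N k, (Real.exp ((v j + t * d j) / μ k) / W N μ v d 1 k t) * x j * y j
      = Mn N μ v d (fun j => x j * y j) k t := by
  show _ = (∑ j ∈ N k, (x j * y j) * Real.exp ((v j + t * d j) / μ k)) / W N μ v d 1 k t
  rw [Finset.sum_div]
  exact Finset.sum_congr rfl fun j _ => by ring

lemma Mn_empty (x : Fin n → ℝ) (hk : N k = ∅) : Mn N μ v d x k t = 0 := by
  rw [Mn, W_empty N μ v d x k t hk, zero_div]

lemma q_nonneg : ∀ j ∈ N k,
    0 ≤ Real.exp ((v j + t * d j) / μ k) / W N μ v d 1 k t := fun j _ =>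
  div_nonneg (Real.exp_pos _).le (W_one_nonneg N μ v d k t)

lemma nest_cov_bound (s : Fin n → ℝ) (D : ℝ) (hD : 0 < D) :
    |Mn N μ v d (fun j => s j * d j) k t - Mn N μ v d s k t * Mn N μ v d d k t|
      ≤ (D * (Mn N μ v d (fun j => s j * s j) k t - (Mn N μ v d s k t) ^ 2)
        + (Mn N μ v d (fun j => d j * d j) k t - (Mn N μ v d d k t) ^ 2) / D) / 2 := by
  rcases (N k).eq_empty_or_nonempty with hk | hk
  · rw [Mn_empty N μ v d t k _ hk, Mn_empty N μ v d t k _ hk, Mn_empty N μ v d t k _ hk,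
      Mn_empty N μ v d t k _ hk, Mn_empty N μ v d t k _ hk]
    simp
  · have h := cov_bound (N k) (fun j => Real.exp ((v j + t * d j) / μ k) / W N μ v d 1 k t)
      s d (q_nonneg N μ v d t k) (q_sum_one N μ v d t k hk) D hD
    simpa only [q_sum_xy, q_sum_x] using h

lemma nest_var_nonneg (s : Fin n → ℝ) :
    0 ≤ Mn N μ v d (fun j => s j * s j) k t - (Mn N μ v d s k t) ^ 2 := by
  rcases (N k).eq_empty_or_nonempty with hk | hk
  · rw [Mn_empty N μ v d t k _ hk, Mn_empty N μ v d t k _ hk]; simp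
  · have h := var_nonneg (N k) (fun j => Real.exp ((v j + t * d j) / μ k) / W N μ v d 1 k t)
      s (q_nonneg N μ v d t k) (q_sum_one N μ v d t k hk)
    simpa only [q_sum_xy, q_sum_x] using h

lemma nest_mean_sq_le (s : Fin n → ℝ) (M : ℝ) (hM : 0 ≤ M) (hs : ∀ j, s j ^ 2 ≤ M) :
    Mn N μ v d (fun j => s j * s j) k t ≤ M := by
  rcases (N k).eq_empty_or_nonempty with hk | hk
  · rw [Mn_empty N μ v d t k _ hk]; exact hM
  · have h := mean_sq_le (N k) (fun j => Real.exp ((v j + t * d j) / μ k) / W N μ v d 1 k t)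
      s (q_nonneg N μ v d t k) (q_sum_one N μ v d t k hk) M (fun j _ => hs j)
    simpa only [q_sum_xy] using h

end perNest

section nestLevel
variable (N : Fin L → Finset (Fin n)) (μ : Fin L → ℝ) (v d : Fin n → ℝ) (t : ℝ)

lemma Pa_nonneg (hμ : ∀ k, 0 < μ k ∧ μ k ≤ 1) (hex : ∃ k, (N k).Nonempty) (k : Fin L) :
    0 ≤ Pa N μ v d k t :=
  div_nonneg (Real.rpow_nonneg (W_one_nonneg N μ v d k t) _) (Tl_pos N μ hμ v d t hex).le

lemma Pa_sum (hμ : ∀ k, 0 < μ k ∧ μ k ≤ 1) (hex : ∃ k, (N k).Nonempty) :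
    ∑ k, Pa N μ v d k t = 1 := by
  unfold Pa
  rw [← Finset.sum_div, ← Tl]
  exact div_self (Tl_pos N μ hμ v d t hex).ne'

end nestLevel

section identity
variable (N : Fin L → Finset (Fin n)) (μ : Fin L → ℝ) (v d : Fin n → ℝ) (t : ℝ)

lemma num_eq (hμ : ∀ k, 0 < μ k ∧ μ k ≤ 1) (hex : ∃ k, (N k).Nonempty)
    (x : Fin n → ℝ) (k : Fin L) :
    W N μ v d x k t * (W N μ v d 1 k t) ^ (μ k - 1)
      = (Pa N μ v d k t * Mn N μ v d x k t) * Tl N μ v d t := by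
  rcases (N k).eq_empty_or_nonempty with hk | hk
  · rw [W_empty N μ v d x k t hk, Mn_empty N μ v d t k _ hk]; ring
  · have ha := W_one_pos N μ v d k t hk
    have hT := Tl_pos N μ hμ v d t hex
    have hpow : (W N μ v d 1 k t) ^ (μ k - 1)
        = (W N μ v d 1 k t) ^ (μ k) / W N μ v d 1 k t := by
      rw [Real.rpow_sub ha, Real.rpow_one]
    rw [hpow, Pa, Mn]
    field_simp

lemma DD_eq (hμ : ∀ k, 0 < μ k ∧ μ k ≤ 1) (hex : ∃ k, (N k).Nonempty)
    (s : Fin n → ℝ) (k : Fin L) :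
    DD N μ v d s k t
      = (Pa N μ v d k t / μ k *
          (Mn N μ v d (fun j => s j * d j) k t - Mn N μ v d s k t * Mn N μ v d d k t)
        + Pa N μ v d k t * Mn N μ v d s k t * Mn N μ v d d k t) * Tl N μ v d t := by
  rcases (N k).eq_empty_or_nonempty with hk | hk
  · rw [DD, W_empty N μ v d _ k t hk, W_empty N μ v d s k t hk, W_empty N μ v d d k t hk,
      Mn_empty N μ v d t k _ hk, Mn_empty N μ v d t k _ hk, Mn_empty N μ v d t k _ hk]
    ring
  · have ha := W_one_pos N μ v d k t hk
    have hT := Tl_pos N μ hμ v d t hex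
    have hμk := (hμ k).1
    have hpow : (W N μ v d 1 k t) ^ (μ k - 1)
        = (W N μ v d 1 k t) ^ (μ k) / W N μ v d 1 k t := by
      rw [Real.rpow_sub ha, Real.rpow_one]
    have hpow2 : (W N μ v d 1 k t) ^ (μ k - 1 - 1)
        = (W N μ v d 1 k t) ^ (μ k) / W N μ v d 1 k t / W N μ v d 1 k t := by
      rw [Real.rpow_sub ha (μ k - 1) 1, Real.rpow_one, hpow]
    rw [DD, hpow, hpow2, Pa, Mn, Mn, Mn]
    field_simp
    ring

lemma Hval_eq (hμ : ∀ k, 0 < μ k ∧ μ k ≤ 1) (hex : ∃ k, (N k).Nonempty)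
    (s : Fin n → ℝ) :
    Hval N μ v d s t
      = ∑ k, Pa N μ v d k t / μ k *
          (Mn N μ v d (fun j => s j * d j) k t - Mn N μ v d s k t * Mn N μ v d d k t)
        + (∑ k, Pa N μ v d k t * Mn N μ v d s k t * Mn N μ v d d k t
          - (∑ k, Pa N μ v d k t * Mn N μ v d s k t)
            * (∑ k, Pa N μ v d k t * Mn N μ v d d k t)) := by
  have hT := Tl_pos N μ hμ v d t hex
  have h1 : ∑ k, DD N μ v d s k t
      = (∑ k, (Pa N μ v d k t / μ k *
          (Mn N μ v d (fun j => s j * d j) k t - Mn N μ v d s k t * Mn N μ v d d k t)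
        + Pa N μ v d k t * Mn N μ v d s k t * Mn N μ v d d k t)) * Tl N μ v d t := by
    rw [Finset.sum_mul]
    exact Finset.sum_congr rfl fun k _ => DD_eq N μ v d t hμ hex s k
  have h2 : ∑ k, W N μ v d s k t * (W N μ v d 1 k t) ^ (μ k - 1)
      = (∑ k, Pa N μ v d k t * Mn N μ v d s k t) * Tl N μ v d t := by
    rw [Finset.sum_mul]
    exact Finset.sum_congr rfl fun k _ => num_eq N μ v d t hμ hex s k
  have h3 : ∑ k, W N μ v d d k t * (W N μ v d 1 k t) ^ (μ k - 1)
      = (∑ k, Pa N μ v d k t * Mn N μ v d d k t) * Tl N μ v d t := by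
    rw [Finset.sum_mul]
    exact Finset.sum_congr rfl fun k _ => num_eq N μ v d t hμ hex d k
  rw [Hval, h1, h2, h3, Finset.sum_add_distrib]
  field_simp
  ring

end identity

lemma sum_split {K : Type*} (F : Finset K) (x y : K → ℝ) (D : ℝ) :
    ∑ k ∈ F, (D * x k + y k / D) / 2 = (D * ∑ k ∈ F, x k + (∑ k ∈ F, y k) / D) / 2 := by
  rw [← Finset.sum_div, Finset.sum_add_distrib, ← Finset.mul_sum, ← Finset.sum_div]

lemma mix_le (M X Q m : ℝ) (hm0 : 0 < m) (hm1 : m ≤ 1) (hX : 0 ≤ X)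
    (hQ : Q ≤ (M - X) / m + X) : Q ≤ M / m := by
  have h : (M - X) / m + X ≤ M / m := by
    rw [div_add' _ _ _ hm0.ne', div_le_div_iff₀ hm0 hm0]
    nlinarith [mul_nonneg (mul_nonneg hX (sub_nonneg.mpr hm1)) hm0.le]
  linarith

lemma Hval_bound (N : Fin L → Finset (Fin n)) (μ : Fin L → ℝ)
    (hμ : ∀ k, 0 < μ k ∧ μ k ≤ 1) (hex : ∃ k, (N k).Nonempty)
    (v d s : Fin n → ℝ) (t D m : ℝ)
    (hs : ∀ i, |s i| ≤ 1) (hd : ∀ i, |d i| ≤ D) (hD : 0 < D)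
    (hm : ∀ k, m ≤ μ k) (hm0 : 0 < m) (hm1 : m ≤ 1) :
    |Hval N μ v d s t| ≤ D / m := by
  have hP0 : ∀ k, 0 ≤ Pa N μ v d k t := Pa_nonneg N μ v d t hμ hex
  have hP1 : ∑ k, Pa N μ v d k t = 1 := Pa_sum N μ v d t hμ hex
  have hs2 : ∀ j, s j ^ 2 ≤ 1 := fun j => by
    nlinarith [hs j, abs_nonneg (s j), sq_abs (s j)]
  have hd2 : ∀ j, d j ^ 2 ≤ D ^ 2 := fun j => by
    nlinarith [hd j, abs_nonneg (d j), sq_abs (d j)]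
  -- abbreviations
  set P : Fin L → ℝ := fun k => Pa N μ v d k t with hPdef
  set σ : Fin L → ℝ := fun k => Mn N μ v d s k t with hσdef
  set b : Fin L → ℝ := fun k => Mn N μ v d d k t with hbdef
  set c : Fin L → ℝ := fun k => Mn N μ v d (fun j => s j * d j) k t with hcdef
  set es : Fin L → ℝ := fun k => Mn N μ v d (fun j => s j * s j) k t with hesdef
  set ed : Fin L → ℝ := fun k => Mn N μ v d (fun j => d j * d j) k t with heddef
  have hHeq : Hval N μ v d s t
      = ∑ k, P k / μ k * (c k - σ k * b k)
        + (∑ k, P k * σ k * b k - (∑ k, P k * σ k) * (∑ k, P k * b k)) :=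
    Hval_eq N μ v d t hμ hex s
  set SS : ℝ := ∑ k, P k * σ k * σ k with hSSdef
  set DD2 : ℝ := ∑ k, P k * b k * b k with hDD2def
  have hSS0 : 0 ≤ SS := Finset.sum_nonneg fun k _ => by
    have : P k * σ k * σ k = P k * σ k ^ 2 := by ring
    rw [this]; exact mul_nonneg (hP0 k) (sq_nonneg _)
  have hDD20 : 0 ≤ DD2 := Finset.sum_nonneg fun k _ => by
    have : P k * b k * b k = P k * b k ^ 2 := by ring
    rw [this]; exact mul_nonneg (hP0 k) (sq_nonneg _)
  -- nest-level covariance bound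
  have hY : |∑ k, P k * σ k * b k - (∑ k, P k * σ k) * (∑ k, P k * b k)|
      ≤ (D * (SS - (∑ k, P k * σ k) ^ 2) + (DD2 - (∑ k, P k * b k) ^ 2) / D) / 2 := by
    have := cov_bound Finset.univ P σ b (fun k _ => hP0 k) hP1 D hD
    simpa using this
  -- per-nest covariance bounds, summed
  have hvar_s : ∀ k, 0 ≤ es k - σ k ^ 2 := fun k => nest_var_nonneg N μ v d t k s
  have hvar_d : ∀ k, 0 ≤ ed k - b k ^ 2 := fun k => nest_var_nonneg N μ v d t k d
  have hes1 : ∀ k, es k ≤ 1 := fun k =>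
    nest_mean_sq_le N μ v d t k s 1 zero_le_one hs2
  have hedD : ∀ k, ed k ≤ D ^ 2 := fun k =>
    nest_mean_sq_le N μ v d t k d (D ^ 2) (sq_nonneg D) hd2
  have hX : |∑ k, P k / μ k * (c k - σ k * b k)|
      ≤ ∑ k, P k / μ k * ((D * (es k - σ k ^ 2) + (ed k - b k ^ 2) / D) / 2) := by
    refine (Finset.abs_sum_le_sum_abs _ _).trans (Finset.sum_le_sum fun k _ => ?_)
    rw [abs_mul, abs_of_nonneg (div_nonneg (hP0 k) (hμ k).1.le)]
    exact mul_le_mul_of_nonneg_left (nest_cov_bound N μ v d t k s D hD)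
      (div_nonneg (hP0 k) (hμ k).1.le)
  set Xs : ℝ := ∑ k, P k / μ k * (es k - σ k ^ 2) with hXsdef
  set Xd : ℝ := ∑ k, P k / μ k * (ed k - b k ^ 2) with hXddef
  have hsplit : ∑ k, P k / μ k * ((D * (es k - σ k ^ 2) + (ed k - b k ^ 2) / D) / 2)
      = (D * Xs + Xd / D) / 2 := by
    rw [Finset.sum_congr rfl (fun k _ => (by ring :
      P k / μ k * ((D * (es k - σ k ^ 2) + (ed k - b k ^ 2) / D) / 2)
        = (D * (P k / μ k * (es k - σ k ^ 2)) + (P k / μ k * (ed k - b k ^ 2)) / D) / 2))]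
    rw [sum_split]
  -- bound Xs
  have hXs : Xs ≤ (1 - SS) / m := by
    have step1 : Xs ≤ ∑ k, P k / m * (es k - σ k ^ 2) := by
      refine Finset.sum_le_sum fun k _ => ?_
      exact mul_le_mul_of_nonneg_right
        (div_le_div_of_nonneg_left (hP0 k) hm0 (hm k)) (hvar_s k)
    have step2 : ∑ k, P k / m * (es k - σ k ^ 2)
        = ((∑ k, P k * es k) - SS) / m := by
      rw [Finset.sum_congr rfl (fun k _ => (by ring :
        P k / m * (es k - σ k ^ 2) = (P k * es k - P k * σ k * σ k) / m)),
        ← Finset.sum_div, Finset.sum_sub_distrib]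
    have step3 : ∑ k, P k * es k ≤ 1 := by
      calc ∑ k, P k * es k ≤ ∑ k, P k * 1 :=
            Finset.sum_le_sum fun k _ => mul_le_mul_of_nonneg_left (hes1 k) (hP0 k)
        _ = 1 := by simp only [mul_one]; exact hP1
    calc Xs ≤ ((∑ k, P k * es k) - SS) / m := by rw [← step2]; exact step1
      _ ≤ (1 - SS) / m := by
          rw [div_le_div_iff₀ hm0 hm0]
          nlinarith [step3]
  have hXd : Xd ≤ (D ^ 2 - DD2) / m := by
    have step1 : Xd ≤ ∑ k, P k / m * (ed k - b k ^ 2) := by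
      refine Finset.sum_le_sum fun k _ => ?_
      exact mul_le_mul_of_nonneg_right
        (div_le_div_of_nonneg_left (hP0 k) hm0 (hm k)) (hvar_d k)
    have step2 : ∑ k, P k / m * (ed k - b k ^ 2)
        = ((∑ k, P k * ed k) - DD2) / m := by
      rw [Finset.sum_congr rfl (fun k _ => (by ring :
        P k / m * (ed k - b k ^ 2) = (P k * ed k - P k * b k * b k) / m)),
        ← Finset.sum_div, Finset.sum_sub_distrib]
    have step3 : ∑ k, P k * ed k ≤ D ^ 2 := by
      calc ∑ k, P k * ed k ≤ ∑ k, P k * D ^ 2 :=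
            Finset.sum_le_sum fun k _ => mul_le_mul_of_nonneg_left (hedD k) (hP0 k)
        _ = D ^ 2 := by rw [← Finset.sum_mul, hP1, one_mul]
    calc Xd ≤ ((∑ k, P k * ed k) - DD2) / m := by rw [← step2]; exact step1
      _ ≤ (D ^ 2 - DD2) / m := by
          rw [div_le_div_iff₀ hm0 hm0]
          nlinarith [step3]
  -- combine
  have hQs : Xs + (SS - (∑ k, P k * σ k) ^ 2) ≤ 1 / m := by
    refine mix_le 1 SS _ m hm0 hm1 hSS0 ?_
    have := sq_nonneg (∑ k, P k * σ k)
    linarith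
  have hQd : Xd + (DD2 - (∑ k, P k * b k) ^ 2) ≤ D ^ 2 / m := by
    refine mix_le (D ^ 2) DD2 _ m hm0 hm1 hDD20 ?_
    have := sq_nonneg (∑ k, P k * b k)
    linarith
  have htri : |Hval N μ v d s t|
      ≤ (D * Xs + Xd / D) / 2
        + (D * (SS - (∑ k, P k * σ k) ^ 2) + (DD2 - (∑ k, P k * b k) ^ 2) / D) / 2 := by
    rw [hHeq]
    refine (abs_add_le _ _).trans ?_
    refine add_le_add (hX.trans_eq hsplit) hY
  have hfinal : (D * Xs + Xd / D) / 2
        + (D * (SS - (∑ k, P k * σ k) ^ 2) + (DD2 - (∑ k, P k * b k) ^ 2) / D) / 2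
      ≤ D / m := by
    have e1 : (D * Xs + Xd / D) / 2
        + (D * (SS - (∑ k, P k * σ k) ^ 2) + (DD2 - (∑ k, P k * b k) ^ 2) / D) / 2
        = (D * (Xs + (SS - (∑ k, P k * σ k) ^ 2))
          + (Xd + (DD2 - (∑ k, P k * b k) ^ 2)) / D) / 2 := by ring
    rw [e1]
    have e2 : D / m = (D * (1 / m) + (D ^ 2 / m) / D) / 2 := by
      field_simp; ring
    rw [e2]
    gcongr
  exact htri.trans hfinal


end NLSS
theorem nested_logit_surplus_strongly_smooth
    (n L : ℕ) (hL : 0 < L)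
    (N : Fin L → Finset (Fin n)) (μ : Fin L → ℝ)
    (hμ : ∀ ℓ, 0 < μ ℓ ∧ μ ℓ ≤ 1)
    (hdisj : ∀ ℓ ℓ', ℓ ≠ ℓ' → Disjoint (N ℓ) (N ℓ'))
    (hcover : Finset.univ.biUnion N = (Finset.univ : Finset (Fin n)))
    (E : (Fin n → ℝ) → ℝ)
    (hE : E = fun v => Real.log (∑ ℓ, (∑ i ∈ N ℓ, Real.exp (v i / μ ℓ)) ^ (μ ℓ)))
    (B : ℝ) (hB : B = 1 / ⨅ ℓ, μ ℓ) :
    ∀ v vb : Fin n → ℝ,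
      ∑ i, |fderiv ℝ E v (Pi.single i 1) - fderiv ℝ E vb (Pi.single i 1)| ≤
        B * ⨆ i, |v i - vb i| := by
  intro v vb
  haveI : Nonempty (Fin L) := Fin.pos_iff_nonempty.mp hL
  obtain ⟨k0, -, hk0⟩ := Finset.exists_min_image Finset.univ μ Finset.univ_nonempty
  set m : ℝ := ⨅ ℓ, μ ℓ with hm_def
  have hminf : m = μ k0 := le_antisymm
    (ciInf_le (Set.Finite.bddBelow (Set.finite_range μ)) k0)
    (le_ciInf fun k => hk0 k (Finset.mem_univ k))
  have hm0 : 0 < m := hminf ▸ (hμ k0).1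
  have hm : ∀ k, m ≤ μ k := fun k => hminf ▸ hk0 k (Finset.mem_univ k)
  have hm1 : m ≤ 1 := le_trans (hm k0) (hμ k0).2
  have hB0 : 0 ≤ B := by rw [hB]; positivity
  rcases Nat.eq_zero_or_pos n with hn | hn
  · subst hn
    rw [Finset.univ_eq_empty, Finset.sum_empty]
    have hsup : (⨆ i : Fin 0, |v i - vb i|) = 0 := by
      simp [ciSup_of_empty, Real.sSup_empty]
    rw [hsup, mul_zero]
  · have i0 : Fin n := ⟨0, hn⟩
    have hex : ∃ k, (N k).Nonempty := by
      have hmem : i0 ∈ Finset.univ.biUnion N := by rw [hcover]; exact Finset.mem_univ i0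
      obtain ⟨k, -, hik⟩ := Finset.mem_biUnion.mp hmem
      exact ⟨k, ⟨i0, hik⟩⟩
    have hE' : E = fun v => Real.log (NLSS.Ts N μ v) := hE
    have hfd : ∀ (i : Fin n) (w : Fin n → ℝ),
        fderiv ℝ E w (Pi.single i 1) = NLSS.gd N μ i w := by
      intro i w; rw [hE']; exact NLSS.fderiv_single N μ hμ w hex i
    have hLHS : ∑ i, |fderiv ℝ E v (Pi.single i 1) - fderiv ℝ E vb (Pi.single i 1)|
        = ∑ i, |NLSS.gd N μ i v - NLSS.gd N μ i vb| :=
      Finset.sum_congr rfl fun i _ => by rw [hfd i v, hfd i vb]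
    rw [hLHS]
    set D : ℝ := ⨆ i, |v i - vb i| with hD_def
    have hDle : ∀ i, |v i - vb i| ≤ D := fun i => by
      rw [hD_def]
      exact le_ciSup (Set.Finite.bddAbove (Set.finite_range fun i => |v i - vb i|)) i
    have hD0 : 0 ≤ D := le_trans (abs_nonneg _) (hDle i0)
    rcases eq_or_lt_of_le hD0 with hDeq | hDpos
    · have hveq : v = vb := funext fun i => by
        have h := hDle i
        rw [← hDeq] at h
        exact sub_eq_zero.mp (abs_nonpos_iff.mp h)
      rw [hveq]
      simp only [sub_self, abs_zero, Finset.sum_const_zero]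
      exact mul_nonneg hB0 hD0
    · set d : Fin n → ℝ := fun j => v j - vb j with hd_def
      set s : Fin n → ℝ :=
        fun i => if 0 ≤ NLSS.gd N μ i v - NLSS.gd N μ i vb then 1 else -1 with hs_def
      have hs : ∀ i, |s i| ≤ 1 := by
        intro i; rw [hs_def]; dsimp only; split <;> simp
      have hdD : ∀ i, |d i| ≤ D := fun i => hDle i
      set g : ℝ → ℝ := fun t => ∑ i, s i * NLSS.gd N μ i (vb + t • d) with hg_def
      have hder : ∀ t : ℝ, HasDerivAt g (NLSS.Hval N μ vb d s t) t := fun t =>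
        NLSS.hasDerivAt_sumgd N μ hμ vb d s t hex
      have hbnd : ∀ t : ℝ, ‖NLSS.Hval N μ vb d s t‖ ≤ D / m := fun t => by
        rw [Real.norm_eq_abs]
        exact NLSS.Hval_bound N μ hμ hex vb d s t D m hs hdD hDpos hm hm0 hm1
      have hmvt : ‖g 1 - g 0‖ ≤ (D / m) * ‖(1:ℝ) - 0‖ :=
        (convex_univ).norm_image_sub_le_of_norm_hasDerivWithin_le
          (fun t _ => (hder t).hasDerivWithinAt) (fun t _ => hbnd t)
          (Set.mem_univ 0) (Set.mem_univ 1)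
      have huv1 : vb + (1:ℝ) • d = v := by
        funext j; simp [hd_def]
      have huv0 : vb + (0:ℝ) • d = vb := by
        funext j; simp
      have hg1 : g 1 = ∑ i, s i * NLSS.gd N μ i v := by rw [hg_def]; simp only [huv1]
      have hg0 : g 0 = ∑ i, s i * NLSS.gd N μ i vb := by rw [hg_def]; simp only [huv0]
      have habs : ∑ i, |NLSS.gd N μ i v - NLSS.gd N μ i vb| = g 1 - g 0 := by
        rw [hg1, hg0, ← Finset.sum_sub_distrib]
        refine Finset.sum_congr rfl fun i _ => ?_
        rw [← mul_sub, hs_def]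
        dsimp only
        split
        · rw [one_mul, abs_of_nonneg (by assumption)]
        · rw [neg_one_mul, abs_of_neg (lt_of_not_ge (by assumption))]
      have hBD : D / m = B * D := by rw [hB]; ring
      calc ∑ i, |NLSS.gd N μ i v - NLSS.gd N μ i vb| = g 1 - g 0 := habs
        _ ≤ ‖g 1 - g 0‖ := le_abs_self _
        _ ≤ (D / m) * ‖(1:ℝ) - 0‖ := hmvt
        _ = D / m := by norm_num
        _ = B * D := hBD
end

section
/- The multinomial logit surplus function E(v) = ln(∑_{i=1}^{n} e^{v^(i)}) (the log-sum-exp function) is 1-strongly smooth with respect to the ℓ∞ norm: ‖∇E(v) − ∇E(v̄)‖₁ ≤ ‖v − v̄‖∞ for all v, v̄ ∈ ℝⁿ. -/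
open Finset Real

lemma tanh_fact {e : ℝ} (he : 0 ≤ e) : 2 * (Real.exp e - 1) ≤ e * (Real.exp e + 1) := by
  have hg : ∀ x : ℝ, 0 ≤ x → 0 ≤ 1 + (x - 1) * Real.exp x := by
    intro x hx
    have h1 : MonotoneOn (fun x : ℝ => 1 + (x - 1) * Real.exp x) (Set.Ici 0) := by
      apply monotoneOn_of_deriv_nonneg (convex_Ici 0)
      · fun_prop
      · fun_prop
      · intro y hy
        rw [interior_Ici, Set.mem_Ioi] at hy
        have hd : deriv (fun x : ℝ => 1 + (x - 1) * Real.exp x) y = y * Real.exp y := by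
          simp [deriv_fun_add, deriv_fun_mul, Real.deriv_exp]
          ring
        rw [hd]
        positivity
    have := h1 (Set.self_mem_Ici) (Set.mem_Ici.2 hx) hx
    simpa using this
  have h1 : MonotoneOn (fun x : ℝ => x * (Real.exp x + 1) - 2 * (Real.exp x - 1)) (Set.Ici 0) := by
    apply monotoneOn_of_deriv_nonneg (convex_Ici 0)
    · fun_prop
    · fun_prop
    · intro y hy
      rw [interior_Ici, Set.mem_Ioi] at hy
      have hd : deriv (fun x : ℝ => x * (Real.exp x + 1) - 2 * (Real.exp x - 1)) y
          = 1 + (y - 1) * Real.exp y := by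
        rw [deriv_fun_sub (by fun_prop) (by fun_prop), deriv_const_mul _ (by fun_prop)]
        simp [deriv_fun_mul, Real.deriv_exp]
        ring
      rw [hd]
      exact hg y hy.le
  have := h1 (Set.self_mem_Ici) (Set.mem_Ici.2 he) he
  simp at this
  linarith


lemma scalar_frac {a b e : ℝ} (ha : 0 < a) (hb : 0 < b) (he : 0 ≤ e) :
    a / (a + b) - a / (a + Real.exp e ^ 2 * b) ≤ e / 2 := by
  set s := Real.exp e with hs
  have hs1 : 1 ≤ s := Real.one_le_exp he
  have h1 : (0:ℝ) < a + b := by linarith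
  have h2 : (0:ℝ) < a + s ^ 2 * b := by nlinarith
  have key : a / (a + b) - a / (a + s ^ 2 * b) ≤ (s - 1) / (s + 1) := by
    rw [div_sub_div _ _ h1.ne' h2.ne', div_le_div_iff₀ (by positivity) (by positivity)]
    nlinarith [sq_nonneg (a - s * b), mul_pos ha hb, mul_pos (mul_pos ha hb) (mul_pos ha hb)]
  have h3 : (s - 1) / (s + 1) ≤ e / 2 := by
    rw [div_le_div_iff₀ (by linarith) (by norm_num)]
    have := tanh_fact he
    linarith
  linarith


lemma frac_mono {x x' y : ℝ} (hx : 0 < x) (hxx : x ≤ x') (hy : 0 ≤ y) :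
    x / (x + y) ≤ x' / (x' + y) := by
  rw [div_le_div_iff₀ (by linarith) (by linarith)]
  nlinarith

lemma softmax_l1 {n : ℕ} (hn : 0 < n) (v w : Fin n → ℝ) (e : ℝ) (he : 0 ≤ e)
    (h1 : ∀ i, v i - w i ≤ e) (h2 : ∀ i, w i - v i ≤ e) :
    ∑ i, |Real.exp (v i) / (∑ j, Real.exp (v j)) - Real.exp (w i) / (∑ j, Real.exp (w j))| ≤ e := by
  have hne : (univ : Finset (Fin n)).Nonempty := ⟨⟨0, hn⟩, mem_univ _⟩
  set S := ∑ j, Real.exp (v j) with hSdef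
  set T := ∑ j, Real.exp (w j) with hTdef
  have hS : 0 < S := Finset.sum_pos (fun i _ => Real.exp_pos _) hne
  have hT : 0 < T := Finset.sum_pos (fun i _ => Real.exp_pos _) hne
  set p : Fin n → ℝ := fun i => Real.exp (v i) / S with hp
  set q : Fin n → ℝ := fun i => Real.exp (w i) / T with hq
  set A : Finset (Fin n) := univ.filter (fun i => q i ≤ p i) with hA
  set B : Finset (Fin n) := univ.filter (fun i => ¬ q i ≤ p i) with hB
  set a := ∑ i ∈ A, Real.exp (v i) with ha
  set b := ∑ i ∈ B, Real.exp (v i) with hb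
  set a' := ∑ i ∈ A, Real.exp (w i) with ha'
  set b' := ∑ i ∈ B, Real.exp (w i) with hb'
  have hab : a + b = S := Finset.sum_filter_add_sum_filter_not _ _ _
  have hab' : a' + b' = T := Finset.sum_filter_add_sum_filter_not _ _ _
  have hsplit : ∑ i, |p i - q i| = (a / S - a' / T) + (b' / T - b / S) := by
    rw [← Finset.sum_filter_add_sum_filter_not univ (fun i => q i ≤ p i)]
    have e1 : ∑ i ∈ A, |p i - q i| = a / S - a' / T := by
      rw [ha, ha', Finset.sum_div, Finset.sum_div, ← Finset.sum_sub_distrib]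
      apply Finset.sum_congr rfl
      intro i hi
      rw [hA, Finset.mem_filter] at hi
      exact abs_of_nonneg (by linarith [hi.2])
    have e2 : ∑ i ∈ B, |p i - q i| = b' / T - b / S := by
      rw [hb, hb', Finset.sum_div, Finset.sum_div, ← Finset.sum_sub_distrib]
      apply Finset.sum_congr rfl
      intro i hi
      rw [hB, Finset.mem_filter] at hi
      rw [abs_of_neg (by push_neg at hi; linarith [hi.2])]
      ring
    rw [e1, e2]
  rw [hsplit]
  have heq : b' / T - b / S = a / S - a' / T := by
    field_simp
    linear_combination S * hab' - T * hab
  rw [heq]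
  have main : a / S - a' / T ≤ e / 2 := by
    have ha0 : 0 ≤ a := Finset.sum_nonneg (fun i _ => (Real.exp_pos _).le)
    have hb0 : 0 ≤ b := Finset.sum_nonneg (fun i _ => (Real.exp_pos _).le)
    rcases eq_or_lt_of_le ha0 with h | hapos
    · have h3 : 0 ≤ a' / T := by positivity
      rw [← h]
      simp
      linarith
    rcases eq_or_lt_of_le hb0 with h | hbpos
    · have hBe : B = ∅ := by
        by_contra hc
        rcases Finset.nonempty_of_ne_empty hc with ⟨i, hi⟩
        have : 0 < b := Finset.sum_pos' (fun j _ => (Real.exp_pos _).le) ⟨i, hi, Real.exp_pos _⟩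
        linarith
      have hb'0 : b' = 0 := by rw [hb', hBe, Finset.sum_empty]
      have h3 : a = S := by linarith
      have h4 : a' = T := by linarith
      rw [h3, h4, div_self hS.ne', div_self hT.ne']
      linarith
    -- main case
    have hAne : A.Nonempty := by
      by_contra hc
      rw [Finset.not_nonempty_iff_eq_empty] at hc
      rw [ha, hc, Finset.sum_empty] at hapos
      exact lt_irrefl _ hapos
    have hBne : B.Nonempty := by
      by_contra hc
      rw [Finset.not_nonempty_iff_eq_empty] at hc
      rw [hb, hc, Finset.sum_empty] at hbpos
      exact lt_irrefl _ hbpos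
    have ha'pos : 0 < a' := Finset.sum_pos (fun i _ => Real.exp_pos _) hAne
    have hb'pos : 0 < b' := Finset.sum_pos (fun i _ => Real.exp_pos _) hBne
    have hsle : Real.exp (-e) * a ≤ a' := by
      rw [ha', ha, Finset.mul_sum]
      apply Finset.sum_le_sum
      intro i _
      rw [← Real.exp_add]
      exact Real.exp_le_exp.2 (by linarith [h1 i])
    have hble : b' ≤ Real.exp e * b := by
      rw [hb', hb, Finset.mul_sum]
      apply Finset.sum_le_sum
      intro i _
      rw [← Real.exp_add]
      exact Real.exp_le_exp.2 (by linarith [h2 i])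
    have hexp : 0 < Real.exp (-e) := Real.exp_pos _
    have hexpe : 0 < Real.exp e := Real.exp_pos _
    have hid : Real.exp (-e) * Real.exp e = 1 := by rw [← Real.exp_add]; simp
    -- chain of fraction inequalities
    have c1 : a' / (a' + Real.exp e * b) ≤ a' / T := by
      rw [← hab']
      apply div_le_div_of_nonneg_left ha'pos.le (by linarith) (by linarith)
    have c2 : (Real.exp (-e) * a) / (Real.exp (-e) * a + Real.exp e * b) ≤
        a' / (a' + Real.exp e * b) := by
      exact frac_mono (mul_pos hexp hapos) hsle (mul_pos hexpe hbpos).le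
    have c3 : (Real.exp (-e) * a) / (Real.exp (-e) * a + Real.exp e * b) =
        a / (a + Real.exp e ^ 2 * b) := by
      have d1 : 0 < Real.exp (-e) * a + Real.exp e * b := by
        have := mul_pos hexp hapos; have := mul_pos hexpe hbpos; linarith
      have d2 : 0 < a + Real.exp e ^ 2 * b := by
        have := mul_pos (pow_pos hexpe 2) hbpos; linarith
      rw [div_eq_div_iff d1.ne' d2.ne']
      linear_combination (a * b * Real.exp e) * hid
    have c4 : a / (a + b) - a / (a + Real.exp e ^ 2 * b) ≤ e / 2 :=
      scalar_frac hapos hbpos he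
    have c5 : a / (a + Real.exp e ^ 2 * b) ≤ a' / T := by
      have h6 := le_trans c2 c1
      rw [c3] at h6
      exact h6
    rw [← hab]
    linarith only [c4, c5]
  linarith only [main]


lemma fderiv_lse {n : ℕ} (hn : 0 < n) (v : Fin n → ℝ) (i : Fin n) :
    fderiv ℝ (fun v : Fin n → ℝ => Real.log (∑ j, Real.exp (v j))) v (Pi.single i 1)
      = Real.exp (v i) / (∑ j, Real.exp (v j)) := by
  have hS : 0 < ∑ j, Real.exp (v j) :=
    Finset.sum_pos (fun j _ => Real.exp_pos _) ⟨⟨0, hn⟩, Finset.mem_univ _⟩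
  have hterm : ∀ j : Fin n, HasFDerivAt (fun v : Fin n → ℝ => Real.exp (v j))
      (Real.exp (v j) • (ContinuousLinearMap.proj j : (Fin n → ℝ) →L[ℝ] ℝ)) v := by
    intro j
    have hp : HasFDerivAt (fun v : Fin n → ℝ => v j)
        (ContinuousLinearMap.proj j : (Fin n → ℝ) →L[ℝ] ℝ) v :=
      hasFDerivAt_apply j v
    exact hp.exp
  have h1 : HasFDerivAt (fun v : Fin n → ℝ => ∑ j, Real.exp (v j))
      (∑ j : Fin n, Real.exp (v j) • (ContinuousLinearMap.proj j : (Fin n → ℝ) →L[ℝ] ℝ)) v :=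
    HasFDerivAt.fun_sum (fun j _ => hterm j)
  have h2 := h1.log hS.ne'
  rw [h2.fderiv]
  simp [ContinuousLinearMap.smul_apply, ContinuousLinearMap.sum_apply,
    ContinuousLinearMap.proj_apply, Pi.single_apply, Finset.sum_ite_eq', mul_comm,
    div_eq_inv_mul]

theorem logsumexp_one_strongly_smooth
    (n : ℕ)
    (E : (Fin n → ℝ) → ℝ)
    (hE : E = fun v => Real.log (∑ i, Real.exp (v i))) :
    ∀ v vb : Fin n → ℝ,
      ∑ i, |fderiv ℝ E v (Pi.single i 1) - fderiv ℝ E vb (Pi.single i 1)| ≤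
        ⨆ i, |v i - vb i| := by
  subst hE
  intro v vb
  rcases Nat.eq_zero_or_pos n with hn | hn
  · subst hn
    simp [Real.iSup_of_isEmpty]
  · have hεb : ∀ i, |v i - vb i| ≤ ⨆ i, |v i - vb i| :=
      fun i => le_ciSup (f := fun i => |v i - vb i|) (Finite.bddAbove_range _) i
    have he0 : 0 ≤ ⨆ i, |v i - vb i| := le_trans (abs_nonneg _) (hεb ⟨0, hn⟩)
    have hre : ∑ i, |fderiv ℝ (fun v : Fin n → ℝ => Real.log (∑ j, Real.exp (v j))) v (Pi.single i 1)
          - fderiv ℝ (fun v : Fin n → ℝ => Real.log (∑ j, Real.exp (v j))) vb (Pi.single i 1)|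
        = ∑ i, |Real.exp (v i) / (∑ j, Real.exp (v j)) - Real.exp (vb i) / (∑ j, Real.exp (vb j))| := by
      apply Finset.sum_congr rfl
      intro i _
      rw [fderiv_lse hn v i, fderiv_lse hn vb i]
    rw [hre]
    exact softmax_l1 hn v vb _ he0
      (fun i => (abs_sub_le_iff.1 (hεb i)).1)
      (fun i => (abs_sub_le_iff.1 (hεb i)).2)
end

section
/- Suppose there exist ȳ_k ∈ Y_k (k = 1,…,K) and q̄_j ∈ △ (j = 1,…,J) with ∑_k ȳ_k > ∑_j 𝒩_j q̄_j componentwise (productivity condition). Then the total expected revenue function TER(p) = ∑_{k=1}^{K} π_k(p) + ∑_{j=1}^{J} 𝒩_j E_j(p) satisfies TER(p) ≥ t‖p‖₁ + C for all p ∈ ℝⁿ₊, for some constants t > 0 and C ∈ ℝ; in particular, the sublevel sets of TER restricted to ℝⁿ₊ are bounded. -/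
theorem TER_coercive_on_orthant
    (n K J : ℕ)
    (Y : Fin K → Set (Fin n → ℝ))
    (hYclosed : ∀ k, IsClosed (Y k)) (hYconv : ∀ k, Convex ℝ (Y k))
    (c : Fin K → (Fin n → ℝ) → ℝ)
    (Δ : Set (Fin n → ℝ))
    (hΔ : Δ = {q : Fin n → ℝ | (∀ i, 0 ≤ q i) ∧ ∑ i, q i = 1})
    (Estar : Fin J → (Fin n → ℝ) → ℝ)
    (hEstarconv : ∀ j, ConvexOn ℝ Δ (Estar j))
    (a : Fin J → Fin n → ℝ)
    (𝒩 : Fin J → ℝ) (h𝒩 : ∀ j, 0 < 𝒩 j)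
    (π : Fin K → (Fin n → ℝ) → ℝ)
    (hπ : ∀ k p, IsGreatest ((fun y => (∑ i, p i * y i) - c k y) '' Y k) (π k p))
    (E : Fin J → (Fin n → ℝ) → ℝ)
    (hEj : ∀ j p, IsGreatest ((fun q => (∑ i, q i * (a j i - p i)) - Estar j q) '' Δ) (E j p))
    (ybar : Fin K → Fin n → ℝ) (hybar : ∀ k, ybar k ∈ Y k)
    (qbar : Fin J → Fin n → ℝ) (hqbar : ∀ j, qbar j ∈ Δ)
    (hprod : ∀ i, (∑ j, 𝒩 j * qbar j i) < ∑ k, ybar k i)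
    (TER : (Fin n → ℝ) → ℝ)
    (hTER : TER = fun p => (∑ k, π k p) + ∑ j, 𝒩 j * E j p) :
    (∃ t : ℝ, 0 < t ∧ ∃ C : ℝ, ∀ p : Fin n → ℝ, (∀ i, 0 ≤ p i) →
      t * (∑ i, |p i|) + C ≤ TER p) ∧
    ∀ r : ℝ, Bornology.IsBounded {p : Fin n → ℝ | (∀ i, 0 ≤ p i) ∧ TER p ≤ r} := by
  -- lower bound pieces
  set d : Fin n → ℝ := fun i => (∑ k, ybar k i) - ∑ j, 𝒩 j * qbar j i with hd
  have hdpos : ∀ i, 0 < d i := fun i => sub_pos.mpr (hprod i)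
  set C0 : ℝ := (- ∑ k, c k (ybar k)) +
      ∑ j, 𝒩 j * ((∑ i, qbar j i * a j i) - Estar j (qbar j)) with hC0
  have hlow : ∀ p : Fin n → ℝ, (∑ i, p i * d i) + C0 ≤ TER p := by
    intro p
    have h1 : ∀ k, (∑ i, p i * ybar k i) - c k (ybar k) ≤ π k p := by
      intro k
      exact (hπ k p).2 ⟨ybar k, hybar k, rfl⟩
    have h2 : ∀ j, (∑ i, qbar j i * (a j i - p i)) - Estar j (qbar j) ≤ E j p := by
      intro j
      exact (hEj j p).2 ⟨qbar j, hqbar j, rfl⟩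
    have h3 : ∑ k, ((∑ i, p i * ybar k i) - c k (ybar k)) ≤ ∑ k, π k p :=
      Finset.sum_le_sum fun k _ => h1 k
    have h4 : ∑ j, 𝒩 j * ((∑ i, qbar j i * (a j i - p i)) - Estar j (qbar j))
        ≤ ∑ j, 𝒩 j * E j p :=
      Finset.sum_le_sum fun j _ => mul_le_mul_of_nonneg_left (h2 j) (h𝒩 j).le
    have swapY : ∑ i, ∑ k, p i * ybar k i = ∑ k, ∑ i, p i * ybar k i :=
      Finset.sum_comm
    have swapQ : ∑ i, ∑ j, p i * (𝒩 j * qbar j i) = ∑ j, ∑ i, p i * (𝒩 j * qbar j i) :=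
      Finset.sum_comm
    have key : (∑ i, p i * d i) + C0 =
        (∑ k, ((∑ i, p i * ybar k i) - c k (ybar k))) +
        ∑ j, 𝒩 j * ((∑ i, qbar j i * (a j i - p i)) - Estar j (qbar j)) := by
      have expand : ∑ i, p i * d i =
          (∑ i, ∑ k, p i * ybar k i) - ∑ i, ∑ j, p i * (𝒩 j * qbar j i) := by
        simp only [hd, mul_sub, Finset.mul_sum, Finset.sum_sub_distrib]
      rw [expand, swapY, swapQ, hC0]
      simp only [mul_sub, sub_mul, Finset.mul_sum, Finset.sum_sub_distrib]
      ring_nf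
      have fix : ∑ x : Fin J, ∑ y : Fin n, p y * 𝒩 x * qbar x y
          = ∑ x : Fin J, ∑ y : Fin n, 𝒩 x * qbar x y * p y := by
        refine Finset.sum_congr rfl fun x _ => Finset.sum_congr rfl fun y _ => by ring
      rw [fix]
      ring
    rw [hTER, key]
    exact add_le_add h3 h4
  have main : ∃ t : ℝ, 0 < t ∧ ∃ C : ℝ, ∀ p : Fin n → ℝ, (∀ i, 0 ≤ p i) →
      t * (∑ i, |p i|) + C ≤ TER p := by
    rcases Nat.eq_zero_or_pos n with hn | hn
    · refine ⟨1, one_pos, C0, fun p hp => ?_⟩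
      have := hlow p
      subst hn
      simpa using this
    · haveI : Nonempty (Fin n) := ⟨⟨0, hn⟩⟩
      set t := Finset.univ.inf' Finset.univ_nonempty d with ht
      have htpos : 0 < t := by
        rw [ht, Finset.lt_inf'_iff]
        exact fun i _ => hdpos i
      refine ⟨t, htpos, C0, fun p hp => ?_⟩
      refine le_trans (add_le_add_left ?_ C0) (hlow p)
      rw [Finset.mul_sum]
      refine Finset.sum_le_sum fun i _ => ?_
      rw [abs_of_nonneg (hp i), mul_comm]
      exact mul_le_mul_of_nonneg_left (Finset.inf'_le d (Finset.mem_univ i)) (hp i)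
  refine ⟨main, ?_⟩
  obtain ⟨t, htpos, C, hC⟩ := main
  intro r
  apply (Metric.isBounded_closedBall (x := (0 : Fin n → ℝ)) (r := max 0 ((r - C) / t))).subset
  intro p hp
  obtain ⟨hp0, hpr⟩ := hp
  have hsum : ∑ i, |p i| ≤ (r - C) / t := by
    rw [le_div_iff₀ htpos, mul_comm]
    linarith [hC p hp0]
  rw [Metric.mem_closedBall, dist_zero_right]
  refine (pi_norm_le_iff_of_nonneg (le_max_left _ _)).mpr fun i => ?_
  calc ‖p i‖ = |p i| := rfl
    _ ≤ ∑ j, |p j| := Finset.single_le_sum (fun j _ => abs_nonneg (p j)) (Finset.mem_univ i)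
    _ ≤ (r - C) / t := hsum
    _ ≤ max 0 ((r - C) / t) := le_max_right _ _
end
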